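/- arXiv:2412.20852 — 2 statements merged into one kernel-verified Lean document; each statement's English description precedes it below -/
import Mathlib

section
/- Assume ν̄ < ∞ and ρ > ν̄. Then, for the (ρ,ν)-TBRW urn, E[N_k − N_{k−1}] = ν̄·(ρ/(ρ−ν̄))^k for every k ≥ 1. In particular E[N_k] < ∞ for all k. -/
open MeasureTheory ProbabilityTheory Filter
open scoped ENNReal NNReal Topology
set_option linter.unusedSectionVars false
set_option linter.unusedVariables false
set_option linter.unreachableTactic false
set_option linter.unusedTactic false


namespace TBRWPaper

/-- The mean `ν̄ = Σ_k k ν(k)` of the offspring distribution `ν`, in `ℝ≥0∞`. -/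
noncomputable def nubar (ν : PMF ℕ) : ℝ≥0∞ := ∑' k : ℕ, (k : ℝ≥0∞) * ν k

variable {Ω : Type*} [MeasurableSpace Ω]

/-- Number of non-zero colors present in the urn after the addition phase of step `n`
(`ζ i` being the number of balls added at step `i`; colors are numbered consecutively,
so the colors present at that moment are exactly `0, 1, …, urnColors ζ n ω`). -/
def urnColors (ζ : ℕ → Ω → ℕ) (n : ℕ) (ω : Ω) : ℕ := ∑ i ∈ Finset.Icc 1 n, ζ i ω

/-- σ-algebra of the urn history up to (and including) step `n`. -/
def urnPast (ζ B : ℕ → Ω → ℕ) (n : ℕ) : MeasurableSpace Ω :=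
  (⨆ i ∈ Finset.Icc 1 n, MeasurableSpace.comap (ζ i) ⊤) ⊔
  ⨆ i ∈ Finset.Icc 1 n, MeasurableSpace.comap (B i) ⊤

/-- σ-algebra of the urn history just before the draw of step `n` (it includes the
addition phase of step `n`). -/
def urnHist (ζ B : ℕ → Ω → ℕ) (n : ℕ) : MeasurableSpace Ω :=
  urnPast ζ B (n - 1) ⊔ MeasurableSpace.comap (ζ n) ⊤

/-- `IsUrn ρ ν P ζ B` asserts that, under the probability measure `P`, the pair of
processes `(ζ n, B n)_{n ≥ 1}` performs the `(ρ,ν)`-TBRW urn process: at each step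
`n ≥ 1`, first `ζ n ∼ ν` new balls (with brand new colors, numbered consecutively) are
added to the urn independently of the past, then a ball is drawn from the urn with
probability proportional to its weight (color `0` having weight `ρ`, every other ball
weight `1`), its color `B n` is recorded, and it is returned to the urn. -/
structure IsUrn (ρ : ℝ) (ν : PMF ℕ) (P : Measure Ω) (ζ B : ℕ → Ω → ℕ) : Prop where
  prob : IsProbabilityMeasure P
  measζ : ∀ n, Measurable (ζ n)
  measB : ∀ n, Measurable (B n)
  ζ_law : ∀ n, 1 ≤ n → P.map (ζ n) = ν.toMeasure
  ζ_indep : ∀ n, 1 ≤ n → Indep (MeasurableSpace.comap (ζ n) ⊤) (urnPast ζ B (n - 1)) P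
  B_le : ∀ n ω, 1 ≤ n → B n ω ≤ urnColors ζ n ω
  draw_zero : ∀ n, 1 ≤ n → ∀ c : ℕ, ∀ H : Set Ω, MeasurableSet[urnHist ζ B n] H →
      P (H ∩ {ω | urnColors ζ n ω = c} ∩ {ω | B n ω = 0}) =
        ENNReal.ofReal (ρ / (ρ + c)) * P (H ∩ {ω | urnColors ζ n ω = c})
  draw_pos : ∀ n, 1 ≤ n → ∀ c j : ℕ, 1 ≤ j → j ≤ c → ∀ H : Set Ω,
      MeasurableSet[urnHist ζ B n] H →
      P (H ∩ {ω | urnColors ζ n ω = c} ∩ {ω | B n ω = j}) =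
        ENNReal.ofReal (1 / (ρ + c)) * P (H ∩ {ω | urnColors ζ n ω = c})

/-- Number of draws of color `0` up to step `n`. -/
def zeroCount (B : ℕ → Ω → ℕ) (n : ℕ) (ω : Ω) : ℕ :=
  ((Finset.Icc 1 n).filter (fun i => B i ω = 0)).card

/-- `Θ_k`: the step at which color `0` is drawn from the urn for the `k`-th time
(`Θ_0 = 0`; junk value `0` if color `0` is drawn fewer than `k` times). -/
noncomputable def Theta (B : ℕ → Ω → ℕ) (k : ℕ) (ω : Ω) : ℕ :=
  if k = 0 then 0 else sInf {n : ℕ | 1 ≤ n ∧ zeroCount B n ω = k}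

/-- `N_k`: number of non-zero colors present in the urn at step `Θ_k`. -/
noncomputable def Ncol (ζ B : ℕ → Ω → ℕ) (k : ℕ) (ω : Ω) : ℕ :=
  urnColors ζ (Theta B k ω) ω

/-- `Y_k^j`: number of times color `j` has been drawn from the urn up to step `Θ_k`. -/
noncomputable def Ydraw (ζ B : ℕ → Ω → ℕ) (k j : ℕ) (ω : Ω) : ℕ :=
  ((Finset.Icc 1 (Theta B k ω)).filter (fun i => B i ω = j)).card

/-! ### Deterministic lemmas -/

section Det
variable {ζ B : ℕ → Ω → ℕ} {ω : Ω}

lemma urnColors_zero : urnColors ζ 0 ω = 0 := by simp [urnColors]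

lemma urnColors_succ (n : ℕ) :
    urnColors ζ (n + 1) ω = urnColors ζ n ω + ζ (n + 1) ω := by
  rw [urnColors, urnColors, Finset.sum_Icc_succ_top (by omega)]

lemma urnColors_mono : Monotone fun n => urnColors ζ n ω := by
  apply monotone_nat_of_le_succ
  intro n
  rw [urnColors_succ]
  omega

lemma zeroCount_zero : zeroCount B 0 ω = 0 := by simp [zeroCount]

lemma zeroCount_succ (n : ℕ) :
    zeroCount B (n + 1) ω = zeroCount B n ω + if B (n + 1) ω = 0 then 1 else 0 := by
  rw [zeroCount, zeroCount, Finset.card_filter, Finset.card_filter,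
    Finset.sum_Icc_succ_top (by omega)]

lemma zeroCount_mono : Monotone fun n => zeroCount B n ω := by
  apply monotone_nat_of_le_succ
  intro n
  rw [zeroCount_succ]
  omega

/-- intermediate value for the zero count -/
lemma zeroCount_ivt {n j : ℕ} (hj : j ≤ zeroCount B n ω) :
    ∃ m ≤ n, zeroCount B m ω = j := by
  induction n with
  | zero =>
    refine ⟨0, le_rfl, ?_⟩
    rw [zeroCount_zero] at hj ⊢
    omega
  | succ n ih =>
    rcases le_or_gt j (zeroCount B n ω) with h | h
    · obtain ⟨m, hm, hm'⟩ := ih h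
      exact ⟨m, by omega, hm'⟩
    · refine ⟨n + 1, le_rfl, ?_⟩
      rw [zeroCount_succ] at hj ⊢
      by_cases h0 : B (n + 1) ω = 0
      · rw [if_pos h0] at hj ⊢; omega
      · rw [if_neg h0] at hj ⊢; omega

lemma zeroCount_pos_ge_one {n : ℕ} (h : 1 ≤ zeroCount B n ω) : 1 ≤ n := by
  rcases Nat.eq_zero_or_pos n with rfl | h'
  · rw [zeroCount_zero] at h; omega
  · exact h'

variable {k : ℕ}

lemma theta_of_pos (hk : k ≠ 0) :
    Theta B k ω = sInf {n : ℕ | 1 ≤ n ∧ zeroCount B n ω = k} := if_neg hk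

/-- On the event that the zero count reaches `k ≥ 1`, `Theta` is the first time the
zero count equals `k`. -/
lemma theta_mem (hk : 1 ≤ k) (hex : ∃ n, zeroCount B n ω = k) :
    1 ≤ Theta B k ω ∧ zeroCount B (Theta B k ω) ω = k := by
  obtain ⟨n, hn⟩ := hex
  have hne : {n : ℕ | 1 ≤ n ∧ zeroCount B n ω = k}.Nonempty :=
    ⟨n, zeroCount_pos_ge_one (hn ▸ hk), hn⟩
  have := Nat.sInf_mem hne
  rw [theta_of_pos (by omega)]
  exact this

lemma le_theta_iff (hk : 1 ≤ k) (hex : ∃ n, zeroCount B n ω = k) (i : ℕ) (hi : 1 ≤ i) :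
    i ≤ Theta B k ω ↔ zeroCount B (i - 1) ω ≤ k - 1 := by
  obtain ⟨h1, h2⟩ := theta_mem hk hex
  constructor
  · intro hiT
    by_contra hc
    have hzk : k ≤ zeroCount B (i-1) ω := by omega
    obtain ⟨m, hm, hmk⟩ := zeroCount_ivt hzk
    have hm1 : 1 ≤ m := zeroCount_pos_ge_one (hmk ▸ hk)
    have : Theta B k ω ≤ m := by
      rw [theta_of_pos (by omega)]
      exact Nat.sInf_le ⟨hm1, hmk⟩
    omega
  · intro hz
    by_contra hc
    have hTi : Theta B k ω ≤ i - 1 := by omega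
    have := zeroCount_mono (B := B) (ω := ω) hTi
    simp only at this
    omega

lemma theta_mono_of_ex (hk : 1 ≤ k) (hex : ∃ n, zeroCount B n ω = k) {j : ℕ} (hj : j ≤ k) :
    Theta B j ω ≤ Theta B k ω := by
  rcases Nat.eq_zero_or_pos j with rfl | hj1
  · rw [Theta, if_pos rfl]; omega
  obtain ⟨h1, h2⟩ := theta_mem hk hex
  obtain ⟨m, hm, hmk⟩ := zeroCount_ivt (B := B) (ω := ω) (n := Theta B k ω) (j := j) (by omega)
  have hm1 : 1 ≤ m := zeroCount_pos_ge_one (B := B) (ω := ω) (n := m) (by omega)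
  calc Theta B j ω ≤ m := by
        rw [theta_of_pos (k := j) (by omega)]; exact Nat.sInf_le ⟨hm1, hmk⟩
    _ ≤ Theta B k ω := hm

end Det

/-! ### Measurability -/

section Meas
variable {ζ B : ℕ → Ω → ℕ}

lemma meas_comp_comap (f : Ω → ℕ) {γ : Type*} [MeasurableSpace γ] (g : ℕ → γ) :
    Measurable[MeasurableSpace.comap f ⊤] (fun ω => g (f ω)) := by
  intro s _
  exact ⟨g ⁻¹' s, trivial, rfl⟩

lemma comap_le_ambient {f : Ω → ℕ} (hf : Measurable f) :
    MeasurableSpace.comap f ⊤ ≤ ‹MeasurableSpace Ω› := by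
  rintro s ⟨S, -, rfl⟩
  exact hf trivial

lemma comap_zeta_le_past {i n : ℕ} (hi : i ∈ Finset.Icc 1 n) :
    MeasurableSpace.comap (ζ i) ⊤ ≤ urnPast ζ B n :=
  le_trans (le_iSup₂ (f := fun i (_ : i ∈ Finset.Icc 1 n) => MeasurableSpace.comap (ζ i) ⊤) i hi)
    le_sup_left

lemma comap_B_le_past {i n : ℕ} (hi : i ∈ Finset.Icc 1 n) :
    MeasurableSpace.comap (B i) ⊤ ≤ urnPast ζ B n :=
  le_trans (le_iSup₂ (f := fun i (_ : i ∈ Finset.Icc 1 n) => MeasurableSpace.comap (B i) ⊤) i hi)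
    le_sup_right

lemma urnPast_mono {m n : ℕ} (h : m ≤ n) : urnPast ζ B m ≤ (urnPast ζ B n : MeasurableSpace Ω) := by
  apply sup_le
  · refine iSup₂_le fun i hi => le_trans ?_ le_sup_left
    exact le_iSup₂ (f := fun i (_ : i ∈ Finset.Icc 1 n) => MeasurableSpace.comap (ζ i) ⊤) i
      (by simp only [Finset.mem_Icc] at hi ⊢; omega)
  · refine iSup₂_le fun i hi => le_trans ?_ le_sup_right
    exact le_iSup₂ (f := fun i (_ : i ∈ Finset.Icc 1 n) => MeasurableSpace.comap (B i) ⊤) i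
      (by simp only [Finset.mem_Icc] at hi ⊢; omega)

lemma urnPast_le_ambient (hζ : ∀ i, Measurable (ζ i)) (hB : ∀ i, Measurable (B i)) (n : ℕ) :
    urnPast ζ B n ≤ ‹MeasurableSpace Ω› := by
  apply sup_le <;> exact iSup₂_le fun i _ => comap_le_ambient (by first | exact hζ i | exact hB i)

lemma urnHist_le_ambient (hζ : ∀ i, Measurable (ζ i)) (hB : ∀ i, Measurable (B i)) (n : ℕ) :
    urnHist ζ B n ≤ ‹MeasurableSpace Ω› :=
  sup_le (urnPast_le_ambient hζ hB _) (comap_le_ambient (hζ n))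

lemma past_le_hist {n : ℕ} : urnPast ζ B (n - 1) ≤ (urnHist ζ B n : MeasurableSpace Ω) :=
  le_sup_left

lemma meas_urnColors_past (n : ℕ) : Measurable[urnPast ζ B n] (urnColors ζ n) := by
  apply Finset.measurable_sum
  intro i hi
  exact (meas_comp_comap (ζ i) id).mono (comap_zeta_le_past hi) le_rfl

lemma meas_urnColors_hist {n : ℕ} (hn : 1 ≤ n) : Measurable[urnHist ζ B n] (urnColors ζ n) := by
  obtain ⟨m, rfl⟩ : ∃ m, n = m + 1 := ⟨n - 1, by omega⟩
  have hle : urnPast ζ B m ≤ urnHist ζ B (m+1) := by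
    have := past_le_hist (ζ := ζ) (B := B) (n := m+1)
    simpa using this
  have h1 : Measurable[urnHist ζ B (m+1)] (urnColors ζ m) :=
    (meas_urnColors_past m).mono hle le_rfl
  have h2 : Measurable[urnHist ζ B (m+1)] (ζ (m+1)) :=
    (meas_comp_comap (ζ (m+1)) id).mono le_sup_right le_rfl
  have : (fun ω => urnColors ζ (m+1) ω) = fun ω => urnColors ζ m ω + ζ (m+1) ω := by
    funext ω; exact urnColors_succ m
  rw [show urnColors ζ (m+1) = fun ω => urnColors ζ m ω + ζ (m+1) ω from this]
  exact h1.add h2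

lemma meas_zeroCount_past (n : ℕ) : Measurable[urnPast ζ B n] (zeroCount B n) := by
  have : zeroCount B n = fun ω => ∑ i ∈ Finset.Icc 1 n, if B i ω = 0 then 1 else 0 := by
    funext ω; rw [zeroCount, Finset.card_filter]
  rw [this]
  apply Finset.measurable_sum
  intro i hi
  exact (meas_comp_comap (B i) (fun m => if m = 0 then 1 else 0)).mono (comap_B_le_past hi) le_rfl

lemma measSet_zeroCount {n z : ℕ} : MeasurableSet[urnPast ζ B n] {ω | zeroCount B n ω = z} :=
  meas_zeroCount_past n (measurableSet_singleton z)

lemma measSet_zeroCount_le {n z : ℕ} : MeasurableSet[urnPast ζ B n] {ω | zeroCount B n ω ≤ z} :=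
  meas_zeroCount_past n (by trivial : MeasurableSet {m : ℕ | m ≤ z})

lemma measSet_B_eq {i j : ℕ} : MeasurableSet[MeasurableSpace.comap (B i) ⊤] {ω | B i ω = j} :=
  ⟨{j}, trivial, rfl⟩

end Meas

/-! ### Probabilistic setup -/

section Prob
variable {ρ : ℝ} {ν : PMF ℕ} {P : Measure Ω} {ζ B : ℕ → Ω → ℕ}

/-- `p n z = P(Z_n = z)`. -/
noncomputable def pz (P : Measure Ω) (B : ℕ → Ω → ℕ) (n z : ℕ) : ℝ≥0∞ :=
  P {ω | zeroCount B n ω = z}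

/-- `a n z = E[(ρ + C_n) 1_{Z_n = z}]`. -/
noncomputable def az (ρ : ℝ) (P : Measure Ω) (ζ B : ℕ → Ω → ℕ) (n z : ℕ) : ℝ≥0∞ :=
  ∫⁻ ω in {ω | zeroCount B n ω = z}, (ENNReal.ofReal ρ + urnColors ζ n ω) ∂P

lemma measC (h : IsUrn ρ ν P ζ B) (n : ℕ) : Measurable (urnColors ζ n) :=
  (meas_urnColors_past n).mono (urnPast_le_ambient h.measζ h.measB n) le_rfl

lemma measZ (h : IsUrn ρ ν P ζ B) (n : ℕ) : Measurable (zeroCount B n) :=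
  (meas_zeroCount_past n).mono (urnPast_le_ambient h.measζ h.measB n) le_rfl

lemma measSetZ (h : IsUrn ρ ν P ζ B) (n z : ℕ) :
    MeasurableSet {ω | zeroCount B n ω = z} :=
  measZ h n (measurableSet_singleton z)

lemma measSetC (h : IsUrn ρ ν P ζ B) (n c : ℕ) :
    MeasurableSet {ω | urnColors ζ n ω = c} :=
  measC h n (measurableSet_singleton c)

lemma measSetB (h : IsUrn ρ ν P ζ B) (n j : ℕ) :
    MeasurableSet {ω | B n ω = j} :=
  h.measB n (measurableSet_singleton j)

lemma zeta_law (h : IsUrn ρ ν P ζ B) {n : ℕ} (hn : 1 ≤ n) (m : ℕ) :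
    P {ω | ζ n ω = m} = ν m := by
  have : {ω | ζ n ω = m} = ζ n ⁻¹' {m} := rfl
  rw [this, ← Measure.map_apply (h.measζ n) (measurableSet_singleton m), h.ζ_law n hn,
    PMF.toMeasure_apply_singleton _ _ (measurableSet_singleton m)]

lemma zeta_indep_set (h : IsUrn ρ ν P ζ B) {n : ℕ} (hn : 1 ≤ n) (m : ℕ) {A : Set Ω}
    (hA : MeasurableSet[urnPast ζ B (n - 1)] A) :
    P ({ω | ζ n ω = m} ∩ A) = ν m * P A := by
  have hmem : MeasurableSet[MeasurableSpace.comap (ζ n) ⊤] {ω | ζ n ω = m} :=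
    ⟨{m}, trivial, rfl⟩
  rw [(Indep_iff _ _ _).mp (h.ζ_indep n hn) _ _ hmem hA, zeta_law h hn]

/-- Key independence computation: `E[ζ_n 1_A] = ν̄ P(A)` for `A` in the past. -/
lemma lint_zeta (h : IsUrn ρ ν P ζ B) {n : ℕ} (hn : 1 ≤ n) {A : Set Ω}
    (hA : MeasurableSet[urnPast ζ B (n - 1)] A) :
    ∫⁻ ω in A, (ζ n ω : ℝ≥0∞) ∂P = nubar ν * P A := by
  have hAm : MeasurableSet A := urnPast_le_ambient h.measζ h.measB (n - 1) _ hA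
  have hSm : ∀ m : ℕ, MeasurableSet {ω | ζ n ω = m} := fun m =>
    h.measζ n (measurableSet_singleton m)
  have hrw : ∀ ω : Ω, (ζ n ω : ℝ≥0∞)
      = ∑' m : ℕ, Set.indicator {ω' | ζ n ω' = m} (fun _ => (m : ℝ≥0∞)) ω := by
    intro ω
    rw [tsum_eq_single (ζ n ω)]
    · rw [Set.indicator_of_mem (by simp : ω ∈ {ω' | ζ n ω' = ζ n ω})]
    · intro m hm
      exact Set.indicator_of_notMem (by simpa using (Ne.symm hm)) _
  calc ∫⁻ ω in A, (ζ n ω : ℝ≥0∞) ∂P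
      = ∑' m : ℕ, ∫⁻ ω in A, Set.indicator {ω' | ζ n ω' = m} (fun _ => (m : ℝ≥0∞)) ω ∂P := by
        simp_rw [hrw]
        exact lintegral_tsum fun m => (measurable_const.indicator (hSm m)).aemeasurable
    _ = ∑' m : ℕ, (m : ℝ≥0∞) * P ({ω | ζ n ω = m} ∩ A) := by
        congr 1; funext m
        rw [lintegral_indicator (hSm m), setLIntegral_const, Measure.restrict_apply (hSm m)]
    _ = ∑' m : ℕ, (m : ℝ≥0∞) * ν m * P A := by
        congr 1; funext m
        rw [zeta_indep_set h hn m hA, mul_assoc]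
    _ = nubar ν * P A := by
        rw [nubar, ENNReal.tsum_mul_right]

lemma lint_zeta_total (h : IsUrn ρ ν P ζ B) {n : ℕ} (hn : 1 ≤ n) :
    ∫⁻ ω, (ζ n ω : ℝ≥0∞) ∂P = nubar ν := by
  have := h.prob
  have := lint_zeta h hn (A := Set.univ) MeasurableSet.univ
  simpa using this

lemma measζ_coe (h : IsUrn ρ ν P ζ B) (i : ℕ) :
    Measurable fun ω => (ζ i ω : ℝ≥0∞) := measurable_from_top.comp (h.measζ i)

lemma measC_coe (h : IsUrn ρ ν P ζ B) (n : ℕ) :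
    Measurable fun ω => (urnColors ζ n ω : ℝ≥0∞) := measurable_from_top.comp (measC h n)

lemma lint_C_total (h : IsUrn ρ ν P ζ B) (n : ℕ) :
    ∫⁻ ω, (urnColors ζ n ω : ℝ≥0∞) ∂P = n * nubar ν := by
  have hrw : ∀ ω : Ω, (urnColors ζ n ω : ℝ≥0∞) = ∑ i ∈ Finset.Icc 1 n, (ζ i ω : ℝ≥0∞) := by
    intro ω; rw [urnColors]; push_cast; rfl
  simp_rw [hrw]
  rw [lintegral_finset_sum _ (fun i _ => measζ_coe h i)]
  rw [Finset.sum_congr rfl (fun i hi => lint_zeta_total h (Finset.mem_Icc.mp hi).1)]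
  rw [Finset.sum_const, Nat.card_Icc]
  simp [nsmul_eq_mul]

lemma az_le (h : IsUrn ρ ν P ζ B) (n z : ℕ) :
    az ρ P ζ B n z ≤ ENNReal.ofReal ρ + n * nubar ν := by
  have := h.prob
  calc az ρ P ζ B n z ≤ ∫⁻ ω, (ENNReal.ofReal ρ + urnColors ζ n ω) ∂P :=
        setLIntegral_le_lintegral _ _
    _ = ENNReal.ofReal ρ + n * nubar ν := by
        rw [lintegral_add_left measurable_const, lintegral_const, lint_C_total h n]
        simp

lemma az_ne_top (h : IsUrn ρ ν P ζ B) (hnb : nubar ν ≠ ⊤) (n z : ℕ) :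
    az ρ P ζ B n z ≠ ⊤ := by
  refine ne_top_of_le_ne_top ?_ (az_le h n z)
  exact ENNReal.add_ne_top.mpr ⟨ENNReal.ofReal_ne_top, ENNReal.mul_ne_top (by simp) hnb⟩

/-- decomposition of a set integral along the partition `{C_n = c}`. -/
lemma lint_partition (h : IsUrn ρ ν P ζ B) (n : ℕ) {A : Set Ω} (hA : MeasurableSet A)
    (f : Ω → ℝ≥0∞) :
    ∫⁻ ω in A, f ω ∂P = ∑' c : ℕ, ∫⁻ ω in A ∩ {ω | urnColors ζ n ω = c}, f ω ∂P := by
  have hU : A = ⋃ c : ℕ, A ∩ {ω | urnColors ζ n ω = c} := by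
    ext ω; simp only [Set.mem_iUnion, Set.mem_inter_iff, Set.mem_setOf_eq]
    exact ⟨fun hw => ⟨urnColors ζ n ω, hw, rfl⟩, fun ⟨c, hc, _⟩ => hc⟩
  have hdisj : Pairwise (Function.onFun Disjoint fun c => A ∩ {ω | urnColors ζ n ω = c}) := by
    intro c c' hcc
    simp only [Function.onFun, Set.disjoint_left]
    rintro ω ⟨-, hc⟩ ⟨-, hc'⟩
    exact hcc (hc ▸ hc')
  conv_lhs => rw [hU]
  exact lintegral_iUnion (fun c => hA.inter (measSetC h n c)) hdisj f

lemma arith_zero (hρ : 0 < ρ) (c : ℕ) :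
    (ENNReal.ofReal ρ + c) * ENNReal.ofReal (ρ / (ρ + c)) = ENNReal.ofReal ρ := by
  have hc : (0:ℝ) ≤ c := Nat.cast_nonneg c
  have hne : ρ + (c:ℝ) ≠ 0 := by positivity
  rw [← ENNReal.ofReal_natCast c, ← ENNReal.ofReal_add hρ.le hc,
    ← ENNReal.ofReal_mul (by positivity)]
  congr 1
  field_simp

lemma arith_pos (hρ : 0 < ρ) (c : ℕ) :
    (ENNReal.ofReal ρ + c) * ENNReal.ofReal (1 / (ρ + c)) = 1 := by
  have hc : (0:ℝ) ≤ c := Nat.cast_nonneg c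
  have hne : ρ + (c:ℝ) ≠ 0 := by positivity
  rw [← ENNReal.ofReal_natCast c, ← ENNReal.ofReal_add hρ.le hc,
    ← ENNReal.ofReal_mul (by positivity)]
  rw [show (ρ + (c:ℝ)) * (1 / (ρ + c)) = 1 by field_simp]
  exact ENNReal.ofReal_one

lemma tsum_P_partition (h : IsUrn ρ ν P ζ B) (n : ℕ) {H : Set Ω} (hH : MeasurableSet H) :
    ∑' c : ℕ, P (H ∩ {ω | urnColors ζ n ω = c}) = P H := by
  rw [← measure_iUnion (fun c c' hcc => by
      simp only [Function.onFun, Set.disjoint_left]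
      rintro ω ⟨-, hc⟩ ⟨-, hc'⟩
      exact hcc (hc ▸ hc'))
    (fun c => hH.inter (measSetC h n c))]
  congr 1
  ext ω
  simp only [Set.mem_iUnion, Set.mem_inter_iff, Set.mem_setOf_eq]
  exact ⟨fun ⟨c, hc, _⟩ => hc, fun hw => ⟨urnColors ζ n ω, hw, rfl⟩⟩

lemma set_lintegral_split {A : Set Ω} (hA : MeasurableSet A) {t : Set Ω}
    (ht : MeasurableSet t) (f : Ω → ℝ≥0∞) :
    ∫⁻ ω in A, f ω ∂P = ∫⁻ ω in A ∩ t, f ω ∂P + ∫⁻ ω in A ∩ tᶜ, f ω ∂P := by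
  have h2 := lintegral_add_compl (μ := P.restrict A) f ht
  rw [Measure.restrict_restrict ht, Measure.restrict_restrict ht.compl,
    Set.inter_comm t A, Set.inter_comm tᶜ A] at h2
  exact h2.symm

lemma lint_over_zero_draw (h : IsUrn ρ ν P ζ B) (hρ : 0 < ρ) {n : ℕ} (hn : 1 ≤ n)
    {H : Set Ω} (hH : MeasurableSet[urnHist ζ B n] H) :
    ∫⁻ ω in H ∩ {ω | B n ω = 0}, (ENNReal.ofReal ρ + urnColors ζ n ω) ∂P
      = ENNReal.ofReal ρ * P H := by
  have hHa : MeasurableSet H := urnHist_le_ambient h.measζ h.measB n _ hH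
  have hB0 : MeasurableSet {ω | B n ω = 0} := measSetB h n 0
  rw [lint_partition h n (hHa.inter hB0) _]
  have hterm : ∀ c : ℕ,
      ∫⁻ ω in (H ∩ {ω | B n ω = 0}) ∩ {ω | urnColors ζ n ω = c},
        (ENNReal.ofReal ρ + urnColors ζ n ω) ∂P
      = ENNReal.ofReal ρ * P (H ∩ {ω | urnColors ζ n ω = c}) := by
    intro c
    have hmeas : MeasurableSet ((H ∩ {ω | B n ω = 0}) ∩ {ω | urnColors ζ n ω = c}) :=
      (hHa.inter hB0).inter (measSetC h n c)
    have hset : (H ∩ {ω | B n ω = 0}) ∩ {ω | urnColors ζ n ω = c}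
        = H ∩ {ω | urnColors ζ n ω = c} ∩ {ω | B n ω = 0} := by
      ext ω; simp only [Set.mem_inter_iff, Set.mem_setOf_eq]; tauto
    calc ∫⁻ ω in (H ∩ {ω | B n ω = 0}) ∩ {ω | urnColors ζ n ω = c},
          (ENNReal.ofReal ρ + urnColors ζ n ω) ∂P
        = ∫⁻ _ω in (H ∩ {ω | B n ω = 0}) ∩ {ω | urnColors ζ n ω = c},
            (ENNReal.ofReal ρ + c) ∂P := by
          refine setLIntegral_congr_fun_ae hmeas (ae_of_all _ fun ω hw => ?_)
          rw [hw.2]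
      _ = (ENNReal.ofReal ρ + c) * P ((H ∩ {ω | B n ω = 0}) ∩ {ω | urnColors ζ n ω = c}) :=
          setLIntegral_const _ _
      _ = (ENNReal.ofReal ρ + c) * (ENNReal.ofReal (ρ / (ρ + c))
            * P (H ∩ {ω | urnColors ζ n ω = c})) := by
          rw [hset, h.draw_zero n hn c H hH]
      _ = ENNReal.ofReal ρ * P (H ∩ {ω | urnColors ζ n ω = c}) := by
          rw [← mul_assoc, arith_zero hρ]
  simp_rw [hterm]
  rw [ENNReal.tsum_mul_left, tsum_P_partition h n hHa]

lemma lint_over_pos_draw (h : IsUrn ρ ν P ζ B) (hρ : 0 < ρ) {n : ℕ} (hn : 1 ≤ n)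
    {H : Set Ω} (hH : MeasurableSet[urnHist ζ B n] H) :
    ∫⁻ ω in H ∩ {ω | B n ω = 0}ᶜ, (ENNReal.ofReal ρ + urnColors ζ n ω) ∂P
      = ∫⁻ ω in H, (urnColors ζ n ω : ℝ≥0∞) ∂P := by
  have hHa : MeasurableSet H := urnHist_le_ambient h.measζ h.measB n _ hH
  have hB0 : MeasurableSet {ω | B n ω = 0} := measSetB h n 0
  rw [lint_partition h n (hHa.inter hB0.compl) _, lint_partition h n hHa _]
  congr 1
  funext c
  have hmeas : MeasurableSet ((H ∩ {ω | B n ω = 0}ᶜ) ∩ {ω | urnColors ζ n ω = c}) :=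
    (hHa.inter hB0.compl).inter (measSetC h n c)
  have hPS : P ((H ∩ {ω | B n ω = 0}ᶜ) ∩ {ω | urnColors ζ n ω = c})
      = (c : ℝ≥0∞) * (ENNReal.ofReal (1 / (ρ + c)) * P (H ∩ {ω | urnColors ζ n ω = c})) := by
    have hset : (H ∩ {ω | B n ω = 0}ᶜ) ∩ {ω | urnColors ζ n ω = c}
        = ⋃ j ∈ Finset.Icc 1 c, (H ∩ {ω | urnColors ζ n ω = c} ∩ {ω | B n ω = j}) := by
      ext ω
      simp only [Set.mem_inter_iff, Set.mem_setOf_eq, Set.mem_iUnion, Set.mem_compl_iff,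
        Finset.mem_Icc]
      constructor
      · rintro ⟨⟨hω, hb⟩, hc⟩
        exact ⟨B n ω, ⟨by omega, hc ▸ h.B_le n ω hn⟩, ⟨hω, hc⟩, rfl⟩
      · rintro ⟨j, ⟨hj1, hjc⟩, ⟨hω, hc⟩, hb⟩
        exact ⟨⟨hω, by omega⟩, hc⟩
    rw [hset, measure_biUnion_finset ?_ ?_]
    · rw [Finset.sum_congr rfl (fun j hj => h.draw_pos n hn c j (Finset.mem_Icc.mp hj).1
        (Finset.mem_Icc.mp hj).2 H hH)]
      rw [Finset.sum_const, Nat.card_Icc]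
      simp [nsmul_eq_mul]
    · intro j hj j' hj' hjj
      simp only [Set.disjoint_left]
      rintro ω ⟨-, hb⟩ ⟨-, hb'⟩
      exact hjj (hb ▸ hb')
    · exact fun j _ => (hHa.inter (measSetC h n c)).inter (measSetB h n j)
  calc ∫⁻ ω in (H ∩ {ω | B n ω = 0}ᶜ) ∩ {ω | urnColors ζ n ω = c},
        (ENNReal.ofReal ρ + urnColors ζ n ω) ∂P
      = ∫⁻ _ω in (H ∩ {ω | B n ω = 0}ᶜ) ∩ {ω | urnColors ζ n ω = c},
          (ENNReal.ofReal ρ + c) ∂P := by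
        refine setLIntegral_congr_fun_ae hmeas (ae_of_all _ fun ω hw => ?_)
        rw [hw.2]
    _ = (ENNReal.ofReal ρ + c) * P ((H ∩ {ω | B n ω = 0}ᶜ) ∩ {ω | urnColors ζ n ω = c}) :=
        setLIntegral_const _ _
    _ = (c : ℝ≥0∞) * P (H ∩ {ω | urnColors ζ n ω = c}) := by
        rw [hPS, ← mul_assoc, ← mul_assoc, mul_comm (ENNReal.ofReal ρ + (c:ℝ≥0∞)) (c:ℝ≥0∞),
          mul_assoc (c:ℝ≥0∞), arith_pos hρ, mul_one]
    _ = ∫⁻ ω in H ∩ {ω | urnColors ζ n ω = c}, (urnColors ζ n ω : ℝ≥0∞) ∂P := by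
        rw [setLIntegral_congr_fun_ae (hHa.inter (measSetC h n c))
          (ae_of_all _ fun ω (hw : ω ∈ H ∩ {ω | urnColors ζ n ω = c}) =>
            by rw [hw.2] : ∀ᵐ ω ∂P, ω ∈ H ∩ {ω | urnColors ζ n ω = c} →
              (urnColors ζ n ω : ℝ≥0∞) = (c : ℝ≥0∞)), setLIntegral_const]

lemma lint_C_split (h : IsUrn ρ ν P ζ B) (m : ℕ) {A : Set Ω}
    (hA : MeasurableSet[urnPast ζ B m] A) :
    ∫⁻ ω in A, (urnColors ζ (m + 1) ω : ℝ≥0∞) ∂P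
      = ∫⁻ ω in A, (urnColors ζ m ω : ℝ≥0∞) ∂P + nubar ν * P A := by
  have hrw : ∀ ω : Ω, (urnColors ζ (m+1) ω : ℝ≥0∞)
      = (urnColors ζ m ω : ℝ≥0∞) + (ζ (m+1) ω : ℝ≥0∞) := by
    intro ω; rw [urnColors_succ]; push_cast; ring
  simp_rw [hrw]
  rw [lintegral_add_left (measC_coe h m)]
  congr 1
  exact lint_zeta h (n := m + 1) (by omega) hA

lemma az_split (h : IsUrn ρ ν P ζ B) (n z : ℕ) :
    az ρ P ζ B n z = ENNReal.ofReal ρ * pz P B n z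
      + ∫⁻ ω in {ω | zeroCount B n ω = z}, (urnColors ζ n ω : ℝ≥0∞) ∂P := by
  rw [az, lintegral_add_left measurable_const, setLIntegral_const, pz]

lemma event_pos_succ (m z : ℕ) :
    {ω | zeroCount B (m+1) ω = z} ∩ {ω | B (m+1) ω = 0}ᶜ
      = {ω | zeroCount B m ω = z} ∩ {ω | B (m+1) ω = 0}ᶜ := by
  ext ω
  simp only [Set.mem_inter_iff, Set.mem_setOf_eq, Set.mem_compl_iff]
  constructor
  · rintro ⟨h1, h2⟩
    rw [zeroCount_succ, if_neg h2] at h1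
    exact ⟨by omega, h2⟩
  · rintro ⟨h1, h2⟩
    rw [zeroCount_succ, if_neg h2]
    exact ⟨by omega, h2⟩

lemma event_zero_succ (m z : ℕ) :
    {ω | zeroCount B (m+1) ω = z + 1} ∩ {ω | B (m+1) ω = 0}
      = {ω | zeroCount B m ω = z} ∩ {ω | B (m+1) ω = 0} := by
  ext ω
  simp only [Set.mem_inter_iff, Set.mem_setOf_eq]
  constructor
  · rintro ⟨h1, h2⟩
    rw [zeroCount_succ, if_pos h2] at h1
    exact ⟨by omega, h2⟩
  · rintro ⟨h1, h2⟩
    rw [zeroCount_succ, if_pos h2]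
    exact ⟨by omega, h2⟩

lemma event_zero_empty (m : ℕ) :
    {ω | zeroCount B (m+1) ω = 0} ∩ {ω | B (m+1) ω = 0} = (∅ : Set Ω) := by
  ext ω
  simp only [Set.mem_inter_iff, Set.mem_setOf_eq, Set.mem_empty_iff_false, iff_false, not_and]
  intro h1 h2
  rw [zeroCount_succ, if_pos h2] at h1
  omega

/-- The fundamental one-step identity for `a_n(z)`. -/
lemma step_eq (h : IsUrn ρ ν P ζ B) (hρ : 0 < ρ) (m z : ℕ) :
    az ρ P ζ B (m+1) z + ENNReal.ofReal ρ * pz P B m z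
      = az ρ P ζ B m z + nubar ν * pz P B m z
        + ENNReal.ofReal ρ * (if z = 0 then 0 else pz P B m (z-1)) := by
  have hmeasHist : ∀ w, MeasurableSet[urnHist ζ B (m+1)] {ω | zeroCount B m ω = w} := by
    intro w
    exact past_le_hist (ζ := ζ) (B := B) (n := m+1) _ (measSet_zeroCount (n := m) (z := w))
  have hZn : MeasurableSet {ω | zeroCount B (m+1) ω = z} := measSetZ h (m+1) z
  have hB0 : MeasurableSet {ω | B (m+1) ω = 0} := measSetB h (m+1) 0
  have hsplit := set_lintegral_split (P := P) hZn hB0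
    (fun ω => (ENNReal.ofReal ρ + urnColors ζ (m+1) ω))
  have hpos :
      ∫⁻ ω in {ω | zeroCount B (m+1) ω = z} ∩ {ω | B (m+1) ω = 0}ᶜ,
        (ENNReal.ofReal ρ + urnColors ζ (m+1) ω) ∂P
      = (∫⁻ ω in {ω | zeroCount B m ω = z}, (urnColors ζ m ω : ℝ≥0∞) ∂P)
          + nubar ν * pz P B m z := by
    rw [event_pos_succ m z, lint_over_pos_draw h hρ (by omega) (hmeasHist z),
      lint_C_split h m (measSet_zeroCount (n := m) (z := z))]
    rfl
  have hzero :
      ∫⁻ ω in {ω | zeroCount B (m+1) ω = z} ∩ {ω | B (m+1) ω = 0},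
        (ENNReal.ofReal ρ + urnColors ζ (m+1) ω) ∂P
      = ENNReal.ofReal ρ * (if z = 0 then 0 else pz P B m (z-1)) := by
    rcases z with _ | w
    · rw [event_zero_empty m]
      simp
    · rw [event_zero_succ m w, lint_over_zero_draw h hρ (by omega) (hmeasHist w)]
      simp [pz]
  have haz : az ρ P ζ B (m+1) z
      = ENNReal.ofReal ρ * (if z = 0 then 0 else pz P B m (z-1))
        + ((∫⁻ ω in {ω | zeroCount B m ω = z}, (urnColors ζ m ω : ℝ≥0∞) ∂P)
            + nubar ν * pz P B m z) := by
    rw [az, hsplit, hzero, hpos]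
  rw [haz, az_split h m z]
  ring
/-- `q z m`: `p_m(z-1)` with the convention that it is `0` for `z = 0`. -/
noncomputable def qz (P : Measure Ω) (B : ℕ → Ω → ℕ) (z m : ℕ) : ℝ≥0∞ :=
  if z = 0 then 0 else pz P B m (z-1)

lemma step_eq' (h : IsUrn ρ ν P ζ B) (hρ : 0 < ρ) (m z : ℕ) :
    az ρ P ζ B (m+1) z + ENNReal.ofReal ρ * pz P B m z
      = az ρ P ζ B m z + nubar ν * pz P B m z + ENNReal.ofReal ρ * qz P B z m := by
  rw [qz]
  by_cases hz : z = 0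
  · subst hz
    rw [if_pos rfl]
    simpa using step_eq h hρ m 0
  · rw [if_neg hz]
    have := step_eq h hρ m z
    rwa [if_neg hz] at this

lemma pz_le_one (h : IsUrn ρ ν P ζ B) (n z : ℕ) : pz P B n z ≤ 1 := by
  have := h.prob
  exact prob_le_one

lemma sum_pz_ne_top (h : IsUrn ρ ν P ζ B) (n z : ℕ) :
    (∑ m ∈ Finset.range n, pz P B m z) ≠ ⊤ :=
  (lt_of_le_of_lt (Finset.sum_le_sum fun m _ => pz_le_one h m z) (by simp)).ne

lemma telescope (h : IsUrn ρ ν P ζ B) (hρ : 0 < ρ) (hnb : nubar ν ≠ ⊤) (z n : ℕ) :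
    az ρ P ζ B n z + ENNReal.ofReal ρ * ∑ m ∈ Finset.range n, pz P B m z
      = az ρ P ζ B 0 z + nubar ν * ∑ m ∈ Finset.range n, pz P B m z
        + ENNReal.ofReal ρ * ∑ m ∈ Finset.range n, qz P B z m := by
  induction n with
  | zero => simp
  | succ n ih =>
    simp only [Finset.sum_range_succ]
    have hstep := step_eq' h hρ n z
    have hne : az ρ P ζ B n z ≠ ⊤ := az_ne_top h hnb n z
    refine (ENNReal.add_right_inj hne).mp ?_
    calc az ρ P ζ B n z + (az ρ P ζ B (n+1) z
          + ENNReal.ofReal ρ * (∑ m ∈ Finset.range n, pz P B m z + pz P B n z))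
        = (az ρ P ζ B (n+1) z + ENNReal.ofReal ρ * pz P B n z)
          + (az ρ P ζ B n z + ENNReal.ofReal ρ * ∑ m ∈ Finset.range n, pz P B m z) := by
          ring
      _ = (az ρ P ζ B n z + nubar ν * pz P B n z + ENNReal.ofReal ρ * qz P B z n)
          + (az ρ P ζ B 0 z + nubar ν * ∑ m ∈ Finset.range n, pz P B m z
            + ENNReal.ofReal ρ * ∑ m ∈ Finset.range n, qz P B z m) := by
          rw [hstep, ih]
      _ = az ρ P ζ B n z + (az ρ P ζ B 0 z
          + nubar ν * (∑ m ∈ Finset.range n, pz P B m z + pz P B n z)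
          + ENNReal.ofReal ρ * (∑ m ∈ Finset.range n, qz P B z m + qz P B z n)) := by
          ring

lemma ennreal_solve {R nb x K : ℝ≥0∞} (hx : x ≠ ⊤) (hlt : nb < R) (hR : R ≠ ⊤)
    (hineq : R * x ≤ K + nb * x) : x ≤ K / (R - nb) := by
  have hnb : nb ≠ ⊤ := hlt.ne_top
  have hsub0 : R - nb ≠ 0 := (tsub_pos_of_lt hlt).ne'
  have hsubtop : R - nb ≠ ⊤ := (lt_of_le_of_lt tsub_le_self hR.lt_top).ne
  have h1 : (R - nb) * x ≤ K := by
    rw [ENNReal.sub_mul fun _ _ => hx]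
    exact tsub_le_iff_right.mpr hineq
  rw [ENNReal.le_div_iff_mul_le (Or.inl hsub0) (Or.inl hsubtop), mul_comm]
  exact h1

lemma qz_zero (m : ℕ) : qz P B 0 m = 0 := rfl

lemma qz_succ (w m : ℕ) : qz P B (w+1) m = pz P B m w := rfl

/-- `S z = Σ_m P(Z_m = z)` is finite. -/
lemma Sz_ne_top (h : IsUrn ρ ν P ζ B) (hρ : 0 < ρ) (hnb : nubar ν ≠ ⊤)
    (hlt : nubar ν < ENNReal.ofReal ρ) (z : ℕ) :
    (∑' m : ℕ, pz P B m z) ≠ ⊤ := by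
  induction z with
  | zero =>
    have hbound : ∀ n : ℕ, ∑ m ∈ Finset.range n, pz P B m 0
        ≤ az ρ P ζ B 0 0 / (ENNReal.ofReal ρ - nubar ν) := by
      intro n
      refine ennreal_solve (sum_pz_ne_top h n 0) hlt ENNReal.ofReal_ne_top ?_
      have := telescope h hρ hnb 0 n
      simp only [qz_zero, Finset.sum_const, smul_zero, mul_zero, add_zero] at this
      calc ENNReal.ofReal ρ * ∑ m ∈ Finset.range n, pz P B m 0
          ≤ az ρ P ζ B n 0 + ENNReal.ofReal ρ * ∑ m ∈ Finset.range n, pz P B m 0 :=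
            le_add_self
        _ = az ρ P ζ B 0 0 + nubar ν * ∑ m ∈ Finset.range n, pz P B m 0 := this
    refine (lt_of_le_of_lt (ENNReal.summable.tsum_le_of_sum_range_le hbound) ?_).ne
    exact ENNReal.div_lt_top (az_ne_top h hnb 0 0) ((tsub_pos_of_lt hlt).ne')
  | succ w ih =>
    have hK : az ρ P ζ B 0 (w+1) + ENNReal.ofReal ρ * ∑' m, pz P B m w ≠ ⊤ :=
      ENNReal.add_ne_top.mpr ⟨az_ne_top h hnb 0 (w+1),
        ENNReal.mul_ne_top ENNReal.ofReal_ne_top ih⟩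
    have hbound : ∀ n : ℕ, ∑ m ∈ Finset.range n, pz P B m (w+1)
        ≤ (az ρ P ζ B 0 (w+1) + ENNReal.ofReal ρ * ∑' m, pz P B m w)
            / (ENNReal.ofReal ρ - nubar ν) := by
      intro n
      refine ennreal_solve (sum_pz_ne_top h n (w+1)) hlt ENNReal.ofReal_ne_top ?_
      have htel := telescope h hρ hnb (w+1) n
      simp only [qz_succ] at htel
      calc ENNReal.ofReal ρ * ∑ m ∈ Finset.range n, pz P B m (w+1)
          ≤ az ρ P ζ B n (w+1) + ENNReal.ofReal ρ * ∑ m ∈ Finset.range n, pz P B m (w+1) :=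
            le_add_self
        _ = az ρ P ζ B 0 (w+1) + nubar ν * ∑ m ∈ Finset.range n, pz P B m (w+1)
            + ENNReal.ofReal ρ * ∑ m ∈ Finset.range n, pz P B m w := htel
        _ ≤ az ρ P ζ B 0 (w+1) + nubar ν * ∑ m ∈ Finset.range n, pz P B m (w+1)
            + ENNReal.ofReal ρ * ∑' m, pz P B m w := by
            gcongr
            exact ENNReal.sum_le_tsum _
        _ = az ρ P ζ B 0 (w+1) + ENNReal.ofReal ρ * ∑' m, pz P B m w
            + nubar ν * ∑ m ∈ Finset.range n, pz P B m (w+1) := by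
            ring
    refine (lt_of_le_of_lt (ENNReal.summable.tsum_le_of_sum_range_le hbound) ?_).ne
    exact ENNReal.div_lt_top hK ((tsub_pos_of_lt hlt).ne')

lemma pz_tendsto_zero (h : IsUrn ρ ν P ζ B) (hρ : 0 < ρ) (hnb : nubar ν ≠ ⊤)
    (hlt : nubar ν < ENNReal.ofReal ρ) (z : ℕ) :
    Tendsto (fun n => pz P B n z) atTop (𝓝 0) :=
  ENNReal.tendsto_atTop_zero_of_tsum_ne_top (Sz_ne_top h hρ hnb hlt z)

lemma Qz_eq (h : IsUrn ρ ν P ζ B) (n z : ℕ) :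
    P {ω | zeroCount B n ω ≤ z} = ∑ w ∈ Finset.range (z+1), pz P B n w := by
  have : {ω | zeroCount B n ω ≤ z} = ⋃ w ∈ Finset.range (z+1), {ω | zeroCount B n ω = w} := by
    ext ω
    simp only [Set.mem_setOf_eq, Set.mem_iUnion, Finset.mem_range]
    exact ⟨fun hw => ⟨zeroCount B n ω, by omega, rfl⟩, fun ⟨w, hw, he⟩ => by omega⟩
  rw [this, measure_biUnion_finset ?_ (fun w _ => measSetZ h n w)]
  · rfl
  · intro w hw w' hw' hww
    simp only [Set.disjoint_left]
    rintro ω hc hc'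
    simp only [Set.mem_setOf_eq] at hc hc'
    exact hww (hc ▸ hc')

lemma Qz_tendsto_zero (h : IsUrn ρ ν P ζ B) (hρ : 0 < ρ) (hnb : nubar ν ≠ ⊤)
    (hlt : nubar ν < ENNReal.ofReal ρ) (z : ℕ) :
    Tendsto (fun n => P {ω | zeroCount B n ω ≤ z}) atTop (𝓝 0) := by
  simp_rw [Qz_eq h]
  have : Tendsto (fun n => ∑ w ∈ Finset.range (z+1), pz P B n w) atTop
      (𝓝 (∑ w ∈ Finset.range (z+1), (0:ℝ≥0∞))) :=
    tendsto_finset_sum _ (fun w _ => pz_tendsto_zero h hρ hnb hlt w)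
  simpa using this

lemma measSetZle (h : IsUrn ρ ν P ζ B) (n z : ℕ) :
    MeasurableSet {ω | zeroCount B n ω ≤ z} :=
  urnPast_le_ambient h.measζ h.measB n _ (measSet_zeroCount_le (n := n) (z := z))

lemma Zle_antitone (z : ℕ) : Antitone (fun n => {ω | zeroCount B n ω ≤ z}) := by
  intro m n hmn
  intro ω hw
  simp only [Set.mem_setOf_eq] at hw ⊢
  exact le_trans (zeroCount_mono (B := B) (ω := ω) hmn) hw

/-- For fixed `i`, `E[ζ_i 1_{Z_n ≤ z}] → 0` as `n → ∞`. -/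
lemma lint_zeta_tail_tendsto (h : IsUrn ρ ν P ζ B) (hρ : 0 < ρ) (hnb : nubar ν ≠ ⊤)
    (hlt : nubar ν < ENNReal.ofReal ρ) {i : ℕ} (hi : 1 ≤ i) (z : ℕ) :
    Tendsto (fun n => ∫⁻ ω in {ω | zeroCount B n ω ≤ z}, (ζ i ω : ℝ≥0∞) ∂P)
      atTop (𝓝 0) := by
  have := h.prob
  set μ' := P.withDensity (fun ω => (ζ i ω : ℝ≥0∞)) with hμ'
  have happ : ∀ n, μ' {ω | zeroCount B n ω ≤ z}
      = ∫⁻ ω in {ω | zeroCount B n ω ≤ z}, (ζ i ω : ℝ≥0∞) ∂P :=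
    fun n => withDensity_apply _ (measSetZle h n z)
  have huniv : μ' Set.univ ≠ ⊤ := by
    rw [hμ', withDensity_apply _ MeasurableSet.univ, Measure.restrict_univ,
      lint_zeta_total h hi]
    exact hnb
  have hfin : μ' {ω | zeroCount B 0 ω ≤ z} ≠ ⊤ :=
    ne_top_of_le_ne_top huniv (measure_mono (Set.subset_univ _))
  have hlim := tendsto_measure_iInter_atTop (μ := μ')
    (fun n => (measSetZle h n z).nullMeasurableSet) (Zle_antitone (B := B) z) ⟨0, hfin⟩
  have hnull : μ' (⋂ n, {ω | zeroCount B n ω ≤ z}) = 0 := by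
    have hPnull : P (⋂ n, {ω | zeroCount B n ω ≤ z}) = 0 := by
      have hle : ∀ n, P (⋂ m, {ω | zeroCount B m ω ≤ z}) ≤ P {ω | zeroCount B n ω ≤ z} :=
        fun n => measure_mono (Set.iInter_subset _ n)
      have := ge_of_tendsto' (Qz_tendsto_zero h hρ hnb hlt z) hle
      exact le_zero_iff.mp this
    rw [withDensity_apply _ (MeasurableSet.iInter (fun n => measSetZle h n z))]
    exact setLIntegral_measure_zero _ _ hPnull
  rw [hnull] at hlim
  exact Tendsto.congr (fun n => happ n) hlim

lemma lint_C_tail_split (h : IsUrn ρ ν P ζ B) (n z : ℕ) :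
    ∫⁻ ω in {ω | zeroCount B n ω ≤ z}, (urnColors ζ n ω : ℝ≥0∞) ∂P
      = ∑ i ∈ Finset.Ioc 0 n, ∫⁻ ω in {ω | zeroCount B n ω ≤ z}, (ζ i ω : ℝ≥0∞) ∂P := by
  have hrw : ∀ ω : Ω, (urnColors ζ n ω : ℝ≥0∞) = ∑ i ∈ Finset.Ioc 0 n, (ζ i ω : ℝ≥0∞) := by
    intro ω
    rw [urnColors, show Finset.Icc 1 n = Finset.Ioc 0 n from rfl]
    push_cast
    rfl
  simp_rw [hrw]
  exact lintegral_finset_sum _ (fun i _ => measζ_coe h i)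

/-- `E[C_n 1_{Z_n ≤ z}] → 0` as `n → ∞`. -/
lemma lint_C_tail_tendsto (h : IsUrn ρ ν P ζ B) (hρ : 0 < ρ) (hnb : nubar ν ≠ ⊤)
    (hlt : nubar ν < ENNReal.ofReal ρ) (z : ℕ) :
    Tendsto (fun n => ∫⁻ ω in {ω | zeroCount B n ω ≤ z}, (urnColors ζ n ω : ℝ≥0∞) ∂P)
      atTop (𝓝 0) := by
  -- the summable majorant
  set u : ℕ → ℝ≥0∞ := fun j => nubar ν * P {ω | zeroCount B j ω ≤ z} with hu
  have husum : (∑' j, u j) ≠ ⊤ := by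
    rw [hu, ENNReal.tsum_mul_left]
    refine ENNReal.mul_ne_top hnb ?_
    have : ∀ j, P {ω | zeroCount B j ω ≤ z} = ∑ w ∈ Finset.range (z+1), pz P B j w :=
      fun j => Qz_eq h j z
    simp_rw [this]
    rw [Summable.tsum_finsetSum (fun _ _ => ENNReal.summable)]
    exact (ENNReal.sum_lt_top.mpr fun w _ =>
      (Sz_ne_top h hρ hnb hlt w).lt_top).ne
  rw [ENNReal.tendsto_atTop_zero]
  intro ε hε
  -- choose the cutoff m with tail ≤ ε/2
  have htail := ENNReal.tendsto_sum_nat_add u husum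
  have hε2 : (0:ℝ≥0∞) < ε / 2 := ENNReal.div_pos hε.ne' (by norm_num)
  obtain ⟨m, hm⟩ := (ENNReal.tendsto_atTop_zero.mp htail) (ε/2) hε2
  have htail_m : (∑' j, u (j + m)) ≤ ε / 2 := hm m le_rfl
  -- the first m terms tend to 0
  have hfirst : Tendsto (fun n => ∑ i ∈ Finset.Ioc 0 m,
      ∫⁻ ω in {ω | zeroCount B n ω ≤ z}, (ζ i ω : ℝ≥0∞) ∂P) atTop (𝓝 0) := by
    have := tendsto_finset_sum (Finset.Ioc 0 m)
      (fun i hi => lint_zeta_tail_tendsto h hρ hnb hlt (Finset.mem_Ioc.mp hi).1 z)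
    simpa using this
  obtain ⟨N, hN⟩ := (ENNReal.tendsto_atTop_zero.mp hfirst) (ε/2) hε2
  refine ⟨max N m, fun n hn => ?_⟩
  have hmn : m ≤ n := le_trans (le_max_right N m) hn
  have hNn : N ≤ n := le_trans (le_max_left N m) hn
  -- split the sum at m
  rw [lint_C_tail_split h n z, ← Finset.sum_Ioc_consecutive _ (Nat.zero_le m) hmn]
  have h1 : ∑ i ∈ Finset.Ioc 0 m, ∫⁻ ω in {ω | zeroCount B n ω ≤ z}, (ζ i ω : ℝ≥0∞) ∂P
      ≤ ε / 2 := hN n hNn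
  have h2 : ∑ i ∈ Finset.Ioc m n, ∫⁻ ω in {ω | zeroCount B n ω ≤ z}, (ζ i ω : ℝ≥0∞) ∂P
      ≤ ε / 2 := by
    have hstep : ∀ i ∈ Finset.Ioc m n,
        ∫⁻ ω in {ω | zeroCount B n ω ≤ z}, (ζ i ω : ℝ≥0∞) ∂P ≤ u (i - 1) := by
      intro i hi
      obtain ⟨hmi, hin⟩ := Finset.mem_Ioc.mp hi
      calc ∫⁻ ω in {ω | zeroCount B n ω ≤ z}, (ζ i ω : ℝ≥0∞) ∂P
          ≤ ∫⁻ ω in {ω | zeroCount B (i-1) ω ≤ z}, (ζ i ω : ℝ≥0∞) ∂P :=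
            lintegral_mono_set (Zle_antitone (B := B) z (by omega))
        _ = nubar ν * P {ω | zeroCount B (i-1) ω ≤ z} :=
            lint_zeta h (by omega) (measSet_zeroCount_le (n := i-1) (z := z))
        _ = u (i - 1) := rfl
    calc ∑ i ∈ Finset.Ioc m n, ∫⁻ ω in {ω | zeroCount B n ω ≤ z}, (ζ i ω : ℝ≥0∞) ∂P
        ≤ ∑ i ∈ Finset.Ioc m n, u (i - 1) := Finset.sum_le_sum hstep
      _ = ∑ i ∈ Finset.Ico m n, u i := by
          rw [← Finset.Ico_add_one_add_one_eq_Ioc]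
          refine Finset.sum_nbij' (fun i => i - 1) (fun i => i + 1) ?_ ?_ ?_ ?_ ?_ <;>
            (intro i hi
             simp only [Finset.mem_Ico, Finset.mem_Ioc] at *) <;>
            first
              | omega
              | (congr 1; omega)
      _ = ∑ j ∈ Finset.range (n - m), u (m + j) := Finset.sum_Ico_eq_sum_range u m n
      _ ≤ ∑' j, u (j + m) := by
          refine le_trans ?_ (ENNReal.sum_le_tsum (Finset.range (n - m)))
          refine le_of_eq (Finset.sum_congr rfl fun j _ => ?_)
          rw [add_comm]
      _ ≤ ε / 2 := htail_m
  calc ∑ i ∈ Finset.Ioc 0 m, ∫⁻ ω in {ω | zeroCount B n ω ≤ z}, (ζ i ω : ℝ≥0∞) ∂P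
        + ∑ i ∈ Finset.Ioc m n, ∫⁻ ω in {ω | zeroCount B n ω ≤ z}, (ζ i ω : ℝ≥0∞) ∂P
      ≤ ε / 2 + ε / 2 := add_le_add h1 h2
    _ = ε := ENNReal.add_halves ε

/-- `a_n(z) → 0`. -/
lemma az_tendsto_zero (h : IsUrn ρ ν P ζ B) (hρ : 0 < ρ) (hnb : nubar ν ≠ ⊤)
    (hlt : nubar ν < ENNReal.ofReal ρ) (z : ℕ) :
    Tendsto (fun n => az ρ P ζ B n z) atTop (𝓝 0) := by
  have hle : ∀ n, az ρ P ζ B n z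
      ≤ ENNReal.ofReal ρ * P {ω | zeroCount B n ω ≤ z}
        + ∫⁻ ω in {ω | zeroCount B n ω ≤ z}, (urnColors ζ n ω : ℝ≥0∞) ∂P := by
    intro n
    rw [az_split h n z]
    refine add_le_add ?_ ?_
    · refine mul_le_mul_right (measure_mono fun ω hw => ?_) _
      simp only [Set.mem_setOf_eq] at hw ⊢
      omega
    · exact lintegral_mono_set (fun ω hw => by
        simp only [Set.mem_setOf_eq] at hw ⊢; omega)
  have hupper : Tendsto (fun n => ENNReal.ofReal ρ * P {ω | zeroCount B n ω ≤ z}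
      + ∫⁻ ω in {ω | zeroCount B n ω ≤ z}, (urnColors ζ n ω : ℝ≥0∞) ∂P) atTop (𝓝 0) := by
    have h1 : Tendsto (fun n => ENNReal.ofReal ρ * P {ω | zeroCount B n ω ≤ z})
        atTop (𝓝 0) := by
      have := ENNReal.Tendsto.const_mul (a := ENNReal.ofReal ρ)
        (Qz_tendsto_zero h hρ hnb hlt z) (Or.inr ENNReal.ofReal_ne_top)
      simpa using this
    have := h1.add (lint_C_tail_tendsto h hρ hnb hlt z)
    simpa using this
  exact tendsto_of_tendsto_of_tendsto_of_le_of_le tendsto_const_nhds hupper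
    (fun n => zero_le) hle

/-- `S z = Σ_m P(Z_m = z)`. -/
noncomputable def Szv (P : Measure Ω) (B : ℕ → Ω → ℕ) (z : ℕ) : ℝ≥0∞ :=
  ∑' m : ℕ, pz P B m z

lemma az_init (h : IsUrn ρ ν P ζ B) (z : ℕ) :
    az ρ P ζ B 0 z = if z = 0 then ENNReal.ofReal ρ else 0 := by
  have := h.prob
  rcases z with _ | w
  · rw [if_pos rfl, az]
    have hset : {ω : Ω | zeroCount B 0 ω = 0} = Set.univ := by
      ext ω; simp [zeroCount_zero]
    rw [hset, Measure.restrict_univ]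
    simp_rw [urnColors_zero]
    simp
  · rw [if_neg (Nat.succ_ne_zero w), az]
    have hset : {ω : Ω | zeroCount B 0 ω = w + 1} = ∅ := by
      ext ω; simp [zeroCount_zero]
    rw [hset, Measure.restrict_empty, lintegral_zero_measure]

lemma key_eq (h : IsUrn ρ ν P ζ B) (hρ : 0 < ρ) (hnb : nubar ν ≠ ⊤)
    (hlt : nubar ν < ENNReal.ofReal ρ) (z : ℕ) :
    ENNReal.ofReal ρ * Szv P B z
      = az ρ P ζ B 0 z + nubar ν * Szv P B z
        + ENNReal.ofReal ρ * (if z = 0 then 0 else Szv P B (z-1)) := by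
  have h1 : Tendsto (fun n => az ρ P ζ B n z
      + ENNReal.ofReal ρ * ∑ m ∈ Finset.range n, pz P B m z) atTop
      (𝓝 (0 + ENNReal.ofReal ρ * Szv P B z)) :=
    (az_tendsto_zero h hρ hnb hlt z).add
      (ENNReal.Tendsto.const_mul (ENNReal.tendsto_nat_tsum _) (Or.inr ENNReal.ofReal_ne_top))
  have hq : Tendsto (fun n => ∑ m ∈ Finset.range n, qz P B z m) atTop
      (𝓝 (if z = 0 then 0 else Szv P B (z-1))) := by
    rcases z with _ | w
    · simp only [qz_zero, Finset.sum_const_zero, if_pos rfl]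
      exact tendsto_const_nhds
    · simp only [qz_succ, if_neg (Nat.succ_ne_zero w), Nat.add_sub_cancel]
      exact ENNReal.tendsto_nat_tsum _
  have h2 : Tendsto (fun n => az ρ P ζ B 0 z
      + nubar ν * ∑ m ∈ Finset.range n, pz P B m z
      + ENNReal.ofReal ρ * ∑ m ∈ Finset.range n, qz P B z m) atTop
      (𝓝 (az ρ P ζ B 0 z + nubar ν * Szv P B z
        + ENNReal.ofReal ρ * (if z = 0 then 0 else Szv P B (z-1)))) :=
    (tendsto_const_nhds.add
      (ENNReal.Tendsto.const_mul (ENNReal.tendsto_nat_tsum _) (Or.inr hnb))).add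
      (ENNReal.Tendsto.const_mul hq (Or.inr ENNReal.ofReal_ne_top))
  have := tendsto_nhds_unique
    ((tendsto_congr (fun n => telescope h hρ hnb z n)).mp h1) h2
  simpa using this

lemma Szv_ne_top (h : IsUrn ρ ν P ζ B) (hρ : 0 < ρ) (hnb : nubar ν ≠ ⊤)
    (hlt : nubar ν < ENNReal.ofReal ρ) (z : ℕ) : Szv P B z ≠ ⊤ :=
  Sz_ne_top h hρ hnb hlt z

lemma Szv_toReal (h : IsUrn ρ ν P ζ B) (hρ : 0 < ρ) (hnb : nubar ν ≠ ⊤)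
    (hρν : (nubar ν).toReal < ρ) (z : ℕ) :
    (Szv P B z).toReal = (ρ / (ρ - (nubar ν).toReal)) ^ (z + 1) := by
  have hlt : nubar ν < ENNReal.ofReal ρ := by
    rw [ENNReal.lt_ofReal_iff_toReal_lt hnb]
    exact hρν
  have hsubne : ρ - (nubar ν).toReal ≠ 0 := ne_of_gt (by linarith)
  have hnbS : ∀ w, nubar ν * Szv P B w ≠ ⊤ :=
    fun w => ENNReal.mul_ne_top hnb (Szv_ne_top h hρ hnb hlt w)
  have hRS : ∀ w, ENNReal.ofReal ρ * Szv P B w ≠ ⊤ :=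
    fun w => ENNReal.mul_ne_top ENNReal.ofReal_ne_top (Szv_ne_top h hρ hnb hlt w)
  induction z with
  | zero =>
    have hk := key_eq h hρ hnb hlt 0
    rw [az_init h 0, if_pos rfl, if_pos rfl, mul_zero, add_zero] at hk
    have htr := congrArg ENNReal.toReal hk
    rw [ENNReal.toReal_mul, ENNReal.toReal_add ENNReal.ofReal_ne_top (hnbS 0),
      ENNReal.toReal_mul, ENNReal.toReal_ofReal hρ.le] at htr
    rw [pow_one, eq_div_iff hsubne]
    ring_nf
    ring_nf at htr
    linarith
  | succ w ih =>
    have hk := key_eq h hρ hnb hlt (w+1)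
    rw [az_init h (w+1), if_neg (Nat.succ_ne_zero w), if_neg (Nat.succ_ne_zero w),
      zero_add, Nat.add_sub_cancel] at hk
    have htr := congrArg ENNReal.toReal hk
    rw [ENNReal.toReal_mul, ENNReal.toReal_add (hnbS (w+1)) (hRS w),
      ENNReal.toReal_mul, ENNReal.toReal_mul, ENNReal.toReal_ofReal hρ.le] at htr
    rw [ih] at htr
    rw [pow_succ, mul_comm (_ ^ (w+1)), div_mul_eq_mul_div, eq_div_iff hsubne]
    ring_nf
    ring_nf at htr
    linarith

lemma Ncol_zero (ω : Ω) : Ncol ζ B 0 ω = 0 := by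
  rw [Ncol, Theta, if_pos rfl, urnColors_zero]

lemma G_compl_null (h : IsUrn ρ ν P ζ B) (hρ : 0 < ρ) (hnb : nubar ν ≠ ⊤)
    (hlt : nubar ν < ENNReal.ofReal ρ) {k : ℕ} (hk : 1 ≤ k) :
    P {ω | ¬ ∃ n, zeroCount B n ω = k} = 0 := by
  have hsub : ∀ n : ℕ, {ω : Ω | ¬ ∃ n, zeroCount B n ω = k}
      ⊆ {ω | zeroCount B n ω ≤ k - 1} := by
    intro n ω hw
    simp only [Set.mem_setOf_eq, not_exists] at hw ⊢
    by_contra hc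
    obtain ⟨m, -, hm⟩ := zeroCount_ivt (B := B) (ω := ω) (n := n) (j := k) (by omega)
    exact hw m hm
  have hle : ∀ n : ℕ, P {ω | ¬ ∃ n, zeroCount B n ω = k}
      ≤ P {ω | zeroCount B n ω ≤ k - 1} := fun n => measure_mono (hsub n)
  exact le_zero_iff.mp (ge_of_tendsto' (Qz_tendsto_zero h hρ hnb hlt (k-1)) hle)

/-- The Wald-type integrand: the contribution of step `j+1` to `N_k`. -/
noncomputable def FW (ζ B : ℕ → Ω → ℕ) (k j : ℕ) (ω : Ω) : ℝ≥0∞ :=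
  if zeroCount B j ω ≤ k - 1 then (ζ (j+1) ω : ℝ≥0∞) else 0

lemma Ncol_eq_tsum {k : ℕ} (hk : 1 ≤ k) {ω : Ω} (hω : ∃ n, zeroCount B n ω = k) :
    (Ncol ζ B k ω : ℝ≥0∞) = ∑' j : ℕ, FW ζ B k j ω := by
  have hcond : ∀ j : ℕ, (zeroCount B j ω ≤ k-1) ↔ j ∈ Finset.range (Theta B k ω) := by
    intro j
    rw [Finset.mem_range]
    have := le_theta_iff (B := B) (ω := ω) hk hω (j+1) (by omega)
    constructor
    · intro hj
      have := this.mpr hj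
      omega
    · intro hj
      exact this.mp (by omega)
  simp only [FW]
  rw [tsum_eq_sum (s := Finset.range (Theta B k ω))
    (fun j hj => if_neg (fun hc => hj ((hcond j).mp hc)))]
  rw [Finset.sum_congr rfl (fun j hj => if_pos ((hcond j).mpr hj))]
  rw [Ncol, urnColors]
  rw [show ∑ i ∈ Finset.Icc 1 (Theta B k ω), ζ i ω
      = ∑ j ∈ Finset.range (Theta B k ω), ζ (j+1) ω by
    refine Finset.sum_nbij' (fun i => i - 1) (fun j => j + 1) ?_ ?_ ?_ ?_ ?_ <;>
      (intro i hi
       simp only [Finset.mem_Icc, Finset.mem_range] at *) <;>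
      first
        | omega
        | (congr 1; omega)]
  push_cast
  rfl

lemma measFW (h : IsUrn ρ ν P ζ B) (k j : ℕ) : Measurable (FW ζ B k j) :=
  Measurable.ite (measSetZle h j (k-1)) (measζ_coe h (j+1)) measurable_const

lemma lint_FW (h : IsUrn ρ ν P ζ B) (k j : ℕ) :
    ∫⁻ ω, FW ζ B k j ω ∂P = nubar ν * P {ω | zeroCount B j ω ≤ k-1} := by
  have hfn : FW ζ B k j
      = Set.indicator {ω | zeroCount B j ω ≤ k-1} (fun ω => (ζ (j+1) ω : ℝ≥0∞)) := by
    funext ω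
    by_cases hw : zeroCount B j ω ≤ k-1
    · simp [FW, Set.indicator_apply, hw]
    · simp [FW, Set.indicator_apply, hw]
  rw [hfn, lintegral_indicator (measSetZle h j (k-1))]
  exact lint_zeta h (n := j+1) (by omega) (measSet_zeroCount_le (n := j) (z := k-1))

lemma Ncol_ae_eq (h : IsUrn ρ ν P ζ B) (hρ : 0 < ρ) (hnb : nubar ν ≠ ⊤)
    (hlt : nubar ν < ENNReal.ofReal ρ) {k : ℕ} (hk : 1 ≤ k) :
    (fun ω => (Ncol ζ B k ω : ℝ≥0∞)) =ᵐ[P] fun ω => ∑' j : ℕ, FW ζ B k j ω := by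
  rw [Filter.EventuallyEq, ae_iff]
  refine measure_mono_null (fun ω hw => ?_) (G_compl_null h hρ hnb hlt hk)
  simp only [Set.mem_setOf_eq] at hw ⊢
  intro hex
  exact hw (Ncol_eq_tsum hk hex)

lemma Ncol_lintegral (h : IsUrn ρ ν P ζ B) (hρ : 0 < ρ) (hnb : nubar ν ≠ ⊤)
    (hlt : nubar ν < ENNReal.ofReal ρ) (k : ℕ) :
    ∫⁻ ω, (Ncol ζ B k ω : ℝ≥0∞) ∂P = nubar ν * ∑ w ∈ Finset.range k, Szv P B w := by
  rcases Nat.eq_zero_or_pos k with rfl | hk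
  · simp [Ncol_zero]
  rw [lintegral_congr_ae (Ncol_ae_eq h hρ hnb hlt hk),
    lintegral_tsum (fun j => (measFW h k j).aemeasurable)]
  simp_rw [lint_FW h k]
  have hstep : ∀ j : ℕ, nubar ν * P {ω | zeroCount B j ω ≤ k-1}
      = nubar ν * ∑ w ∈ Finset.range k, pz P B j w := by
    intro j
    rw [Qz_eq h j (k-1), show k-1+1 = k from by omega]
  calc ∑' j : ℕ, nubar ν * P {ω | zeroCount B j ω ≤ k-1}
      = ∑' j : ℕ, nubar ν * ∑ w ∈ Finset.range k, pz P B j w := tsum_congr hstep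
    _ = nubar ν * ∑' j : ℕ, ∑ w ∈ Finset.range k, pz P B j w := ENNReal.tsum_mul_left
    _ = nubar ν * ∑ w ∈ Finset.range k, Szv P B w := by
        rw [Summable.tsum_finsetSum (fun _ _ => ENNReal.summable)]
        rfl

lemma Ncol_lint_ne_top (h : IsUrn ρ ν P ζ B) (hρ : 0 < ρ) (hnb : nubar ν ≠ ⊤)
    (hlt : nubar ν < ENNReal.ofReal ρ) (k : ℕ) :
    ∫⁻ ω, (Ncol ζ B k ω : ℝ≥0∞) ∂P ≠ ⊤ := by
  rw [Ncol_lintegral h hρ hnb hlt k]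
  refine ENNReal.mul_ne_top hnb ?_
  exact (ENNReal.sum_lt_top.mpr fun w _ => (Szv_ne_top h hρ hnb hlt w).lt_top).ne

lemma Ncol_aemeasurable (h : IsUrn ρ ν P ζ B) (hρ : 0 < ρ) (hnb : nubar ν ≠ ⊤)
    (hlt : nubar ν < ENNReal.ofReal ρ) (k : ℕ) :
    AEMeasurable (fun ω => (Ncol ζ B k ω : ℝ≥0∞)) P := by
  rcases Nat.eq_zero_or_pos k with rfl | hk
  · simp only [Ncol_zero]
    exact aemeasurable_const
  exact (Measurable.ennreal_tsum (fun i => measFW h k i)).aemeasurable.congr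
    (Ncol_ae_eq h hρ hnb hlt hk).symm

lemma Ncol_mono_ae (h : IsUrn ρ ν P ζ B) (hρ : 0 < ρ) (hnb : nubar ν ≠ ⊤)
    (hlt : nubar ν < ENNReal.ofReal ρ) {k : ℕ} (hk : 1 ≤ k) :
    (fun ω => (Ncol ζ B (k-1) ω : ℝ≥0∞)) ≤ᵐ[P] fun ω => (Ncol ζ B k ω : ℝ≥0∞) := by
  rw [Filter.EventuallyLE, ae_iff]
  refine measure_mono_null (fun ω hw => ?_) (G_compl_null h hρ hnb hlt hk)
  simp only [Set.mem_setOf_eq, not_le] at hw ⊢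
  intro hex
  have hθ : Theta B (k-1) ω ≤ Theta B k ω := theta_mono_of_ex hk hex (by omega)
  have := urnColors_mono (ζ := ζ) (ω := ω) hθ
  simp only at this
  exact absurd (Nat.cast_le.mpr this : ((Ncol ζ B (k-1) ω : ℝ≥0∞)) ≤ Ncol ζ B k ω)
    (not_le.mpr hw)

end Prob

/-- **Lemma (expected number of new colors between draws of color `0`).** If
`ρ > ν̄` then `E[N_k - N_{k-1}] = ν̄ (ρ/(ρ-ν̄))^k` for every `k ≥ 1`; in particular
`E[N_k] < ∞` for all `k`. -/
theorem urn_expected_new_colors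
    (ρ : ℝ) (hρ : 0 < ρ) (ν : PMF ℕ) (hν0 : ν 0 < 1)
    (hnubar : nubar ν ≠ ⊤) (hρν : (nubar ν).toReal < ρ)
    {Ω : Type*} [MeasurableSpace Ω] (P : Measure Ω)
    (ζ B : ℕ → Ω → ℕ) (h : IsUrn ρ ν P ζ B) :
    (∀ k : ℕ, 1 ≤ k →
      ∫⁻ ω, ((Ncol ζ B k ω : ℝ≥0∞) - (Ncol ζ B (k - 1) ω : ℝ≥0∞)) ∂P =
        ENNReal.ofReal
          ((nubar ν).toReal * (ρ / (ρ - (nubar ν).toReal)) ^ k)) ∧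
    ∀ k : ℕ, ∫⁻ ω, (Ncol ζ B k ω : ℝ≥0∞) ∂P < ⊤ := by

  have hlt : nubar ν < ENNReal.ofReal ρ := by
    rw [ENNReal.lt_ofReal_iff_toReal_lt hnubar]
    exact hρν
  constructor
  · intro k hk
    obtain ⟨j, rfl⟩ : ∃ j, k = j + 1 := ⟨k - 1, by omega⟩
    rw [lintegral_sub' (Ncol_aemeasurable h hρ hnubar hlt (j+1-1))
      (Ncol_lint_ne_top h hρ hnubar hlt (j+1-1)) (Ncol_mono_ae h hρ hnubar hlt (by omega))]
    rw [Ncol_lintegral h hρ hnubar hlt (j+1), Ncol_lintegral h hρ hnubar hlt (j+1-1)]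
    rw [show j+1-1 = j from rfl, Finset.sum_range_succ, mul_add,
      ENNReal.add_sub_cancel_left (ENNReal.mul_ne_top hnubar
        (ENNReal.sum_lt_top.mpr fun w _ => (Szv_ne_top h hρ hnubar hlt w).lt_top).ne)]
    rw [ENNReal.ofReal_mul ENNReal.toReal_nonneg, ← Szv_toReal h hρ hnubar hρν j,
      ENNReal.ofReal_toReal hnubar, ENNReal.ofReal_toReal (Szv_ne_top h hρ hnubar hlt j)]
  · intro k
    exact (Ncol_lint_ne_top h hρ hnubar hlt k).lt_top

end TBRWPaper
end

section
/- Suppose ρ > 1 + 2ν̄ (with ν̄ < ∞). Then there exists δ = δ(ρ,ν) > 0 such that almost surely, the crossing times of the root loop satisfy τ_k ≥ e^{δk} for all k large enough. -/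
open MeasureTheory ProbabilityTheory Filter
open scoped ENNReal NNReal Topology

namespace TBRWPaper

/-- Vertices of the full planar tree `𝒯_full`: the root is `[]` and the children of a
vertex `v` are the `v ++ [i]`, `i : ℕ` (in their order of creation). -/
abbrev Vertex : Type := List ℕ

instance : MeasurableSpace Vertex := ⊤
instance : MeasurableSpace (Finset Vertex) := ⊤

/-- The father of a vertex (by convention, the father of the root is the root itself). -/
def parent (v : Vertex) : Vertex := v.dropLast

/-- Number of children of `v` in the tree `t`. -/
def nChild (t : Finset Vertex) (v : Vertex) : ℕ :=
  (t.filter (fun w => w ≠ [] ∧ parent w = v)).card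

variable {Ω : Type*} [MeasurableSpace Ω]

/-- σ-algebra of the TBRW history up to (and including) the leaf-creation step `n`;
it makes `T (n+1)` measurable and is the conditioning σ-algebra for the displacement
step producing `S (n+1)`. -/
def hist (T : ℕ → Ω → Finset Vertex) (S : ℕ → Ω → Vertex) (ξ : ℕ → Ω → ℕ) (n : ℕ) :
    MeasurableSpace Ω :=
  ⨆ i ∈ Finset.range (n + 1),
    (MeasurableSpace.comap (T i) ⊤ ⊔ MeasurableSpace.comap (S i) ⊤ ⊔
      MeasurableSpace.comap (ξ i) ⊤)

/-- σ-algebra of the TBRW history strictly before the leaf-creation variable `ξ n`. -/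
def histBefore (T : ℕ → Ω → Finset Vertex) (S : ℕ → Ω → Vertex) (ξ : ℕ → Ω → ℕ) (n : ℕ) :
    MeasurableSpace Ω :=
  (⨆ i ∈ Finset.range (n + 1),
    (MeasurableSpace.comap (T i) ⊤ ⊔ MeasurableSpace.comap (S i) ⊤)) ⊔
  ⨆ i ∈ Finset.range n, MeasurableSpace.comap (ξ i) ⊤

/-- `IsTBRW ρ ν P T S ξ` asserts that, under the probability measure `P`, the pair of
processes `(T n, S n)` performs the `(ρ,ν)`-tree builder random walk: `T 0 = {root}`,
`S 0 = root`, at each step a `ν`-distributed number `ξ n` of new leaves (independent of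
the past) is attached to `S n`, producing `T (n+1)`, and then the walker moves to the
father of `S n` with probability `ρ/(k+ρ)` and to any fixed child of `S n` in `T (n+1)`
with probability `1/(k+ρ)`, where `k` is the number of children of `S n` in `T (n+1)`
(the father of the root being the root itself, which yields the root loop). -/
structure IsTBRW (ρ : ℝ) (ν : PMF ℕ) (P : Measure Ω)
    (T : ℕ → Ω → Finset Vertex) (S : ℕ → Ω → Vertex) (ξ : ℕ → Ω → ℕ) : Prop where
  prob : IsProbabilityMeasure P
  measT : ∀ n, Measurable (T n)
  measS : ∀ n, Measurable (S n)
  measξ : ∀ n, Measurable (ξ n)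
  T_init : ∀ ω, T 0 ω = {([] : Vertex)}
  S_init : ∀ ω, S 0 ω = []
  S_mem : ∀ n ω, S n ω ∈ T n ω
  T_succ : ∀ n ω, T (n + 1) ω = T n ω ∪
      (Finset.range (ξ n ω)).image (fun i => S n ω ++ [nChild (T n ω) (S n ω) + i])
  ξ_law : ∀ n, P.map (ξ n) = ν.toMeasure
  ξ_indep : ∀ n, Indep (MeasurableSpace.comap (ξ n) ⊤) (histBefore T S ξ n) P
  S_succ_mem : ∀ n ω, S (n + 1) ω = parent (S n ω) ∨
      (parent (S (n + 1) ω) = S n ω ∧ S (n + 1) ω ∈ T (n + 1) ω)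
  step_father : ∀ n k, ∀ H : Set Ω, MeasurableSet[hist T S ξ n] H →
      P (H ∩ {ω | nChild (T (n + 1) ω) (S n ω) = k} ∩
          {ω | S (n + 1) ω = parent (S n ω)}) =
        ENNReal.ofReal (ρ / (k + ρ)) *
          P (H ∩ {ω | nChild (T (n + 1) ω) (S n ω) = k})
  step_child : ∀ n k i, i < k → ∀ H : Set Ω, MeasurableSet[hist T S ξ n] H →
      P (H ∩ {ω | nChild (T (n + 1) ω) (S n ω) = k} ∩
          {ω | S (n + 1) ω = S n ω ++ [i]}) =
        ENNReal.ofReal (1 / (k + ρ)) *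
          P (H ∩ {ω | nChild (T (n + 1) ω) (S n ω) = k})

/-- Number of crossings of the root loop during the first `n` steps. -/
def crossCount (S : ℕ → Ω → Vertex) (n : ℕ) (ω : Ω) : ℕ :=
  ((Finset.Icc 1 n).filter (fun i => S (i - 1) ω = ([] : Vertex) ∧ S i ω = [])).card

/-- Time `τ_k` of the `k`-th crossing of the root loop, with value `∞` if this
crossing never occurs. -/
noncomputable def tauE (S : ℕ → Ω → Vertex) (k : ℕ) (ω : Ω) : ℝ≥0∞ :=
  sInf {t : ℝ≥0∞ | ∃ n : ℕ, t = n ∧ 1 ≤ n ∧ crossCount S n ω = k}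

/-! ### Auxiliary material for the proof -/

set_option linter.unusedSectionVars false

section Aux

lemma nChild_mono {t t' : Finset Vertex} (hsub : t ⊆ t') (v : Vertex) :
    nChild t v ≤ nChild t' v :=
  Finset.card_le_card (Finset.filter_subset_filter _ hsub)

lemma parent_concat (l : List ℕ) (a : ℕ) : parent (l ++ [a]) = l := List.dropLast_concat

lemma concat_ne_nil (l : List ℕ) (a : ℕ) : l ++ [a] ≠ [] := by simp

lemma nChild_union (t : Finset Vertex) (s : Vertex) (m : ℕ)
    (hinv : ∀ i, s ++ [i] ∈ t → i < nChild t s) (v : Vertex) :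
    nChild (t ∪ (Finset.range m).image (fun i => s ++ [nChild t s + i])) v
      = nChild t v + (if v = s then m else 0) := by
  classical
  set c := nChild t s with hc
  have hinj : Function.Injective (fun i : ℕ => s ++ [c + i]) := by
    intro i j hij
    simp only at hij
    have := List.append_cancel_left hij
    simp only [List.cons.injEq] at this
    omega
  have hdisj : Disjoint t ((Finset.range m).image (fun i => s ++ [c + i])) := by
    rw [Finset.disjoint_right]
    intro w hw hwt
    simp only [Finset.mem_image, Finset.mem_range] at hw
    obtain ⟨i, _, rfl⟩ := hw
    exact absurd (hinv _ hwt) (by omega)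
  unfold nChild
  rw [Finset.filter_union, Finset.card_union_of_disjoint (Finset.disjoint_filter_filter hdisj)]
  congr 1
  by_cases hv : v = s
  · subst hv
    rw [if_pos rfl, Finset.filter_true_of_mem, Finset.card_image_of_injective _ hinj,
      Finset.card_range]
    intro w hw
    simp only [Finset.mem_image, Finset.mem_range] at hw
    obtain ⟨i, _, rfl⟩ := hw
    exact ⟨concat_ne_nil _ _, parent_concat _ _⟩
  · rw [if_neg hv, Finset.filter_false_of_mem, Finset.card_empty]
    intro w hw
    simp only [Finset.mem_image, Finset.mem_range] at hw
    obtain ⟨i, _, rfl⟩ := hw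
    rw [parent_concat]
    intro hcon
    exact hv (hcon.2.symm)

variable {ρ : ℝ} {ν : PMF ℕ} {P : Measure Ω}
  {T : ℕ → Ω → Finset Vertex} {S : ℕ → Ω → Vertex} {ξ : ℕ → Ω → ℕ}

lemma inv_T (h : IsTBRW ρ ν P T S ξ) :
    ∀ n ω v i, v ++ [i] ∈ T n ω → i < nChild (T n ω) v := by
  intro n
  induction n with
  | zero =>
    intro ω v i hmem
    rw [h.T_init] at hmem
    rw [Finset.mem_singleton] at hmem
    exact absurd hmem (concat_ne_nil v i)
  | succ n ih =>
    intro ω v i hmem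
    have hnc := nChild_union (T n ω) (S n ω) (ξ n ω) (fun j => ih ω _ j)
    rw [h.T_succ] at hmem
    have hgoal : nChild (T (n+1) ω) v
        = nChild (T n ω) v + (if v = S n ω then ξ n ω else 0) := by
      rw [h.T_succ]; exact hnc v
    rw [hgoal]
    rcases Finset.mem_union.1 hmem with hm | hm
    · exact Nat.lt_of_lt_of_le (ih ω v i hm) (Nat.le_add_right _ _)
    · simp only [Finset.mem_image, Finset.mem_range] at hm
      obtain ⟨j, hj, heq⟩ := hm
      have hv : v = S n ω := by
        have := congrArg parent heq.symm
        rwa [parent_concat, parent_concat] at this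
      subst hv
      have hi : i = nChild (T n ω) (S n ω) + j := by
        have h2 := List.append_cancel_left heq.symm
        simp only [List.cons.injEq] at h2
        exact h2.1
      rw [if_pos rfl]
      omega

lemma nChild_T_succ (h : IsTBRW ρ ν P T S ξ) (n : ℕ) (ω : Ω) (v : Vertex) :
    nChild (T (n+1) ω) v = nChild (T n ω) v + (if v = S n ω then ξ n ω else 0) := by
  rw [h.T_succ]; exact nChild_union _ _ _ (fun j => inv_T h n ω _ j) v

lemma nChild_T0 (h : IsTBRW ρ ν P T S ξ) (ω : Ω) (v : Vertex) : nChild (T 0 ω) v = 0 := by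
  rw [h.T_init]
  unfold nChild
  rw [Finset.filter_singleton]
  split
  · next hcon => exact absurd rfl hcon.1
  · rfl

lemma nChild_root (h : IsTBRW ρ ν P T S ξ) (n : ℕ) (ω : Ω) :
    nChild (T (n+1) ω) ([] : Vertex) = ∑ j ∈ Finset.range (n+1), (if S j ω = [] then ξ j ω else 0) := by
  induction n with
  | zero =>
    rw [nChild_T_succ h, nChild_T0 h, Finset.sum_range_one, zero_add]
    exact if_congr eq_comm rfl rfl
  | succ n ih =>
    rw [nChild_T_succ h, ih]
    rw [Finset.sum_range_succ (fun j => if S j ω = [] then ξ j ω else 0) (n+1)]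
    by_cases hS : S (n+1) ω = [] <;> simp [hS]


/-- Number of "good visits" to the root (visits where at least one leaf is created)
up to and including step `n`. -/
def Gcnt (S : ℕ → Ω → Vertex) (ξ : ℕ → Ω → ℕ) (n : ℕ) (ω : Ω) : ℕ :=
  ((Finset.range (n+1)).filter (fun j => S j ω = ([] : Vertex) ∧ 1 ≤ ξ j ω)).card

/-- Number of visits to the root among steps `1..n`. -/
def Acnt (S : ℕ → Ω → Vertex) (n : ℕ) (ω : Ω) : ℕ :=
  ((Finset.Icc 1 n).filter (fun i => S i ω = ([] : Vertex))).card

lemma Gcnt_succ (S : ℕ → Ω → Vertex) (ξ : ℕ → Ω → ℕ) (n : ℕ) (ω : Ω) :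
    Gcnt S ξ (n+1) ω
      = Gcnt S ξ n ω + (if S (n+1) ω = ([] : Vertex) ∧ 1 ≤ ξ (n+1) ω then 1 else 0) := by
  unfold Gcnt
  rw [Finset.range_add_one, Finset.filter_insert]
  split
  · rw [Finset.card_insert_of_notMem (by simp)]
  · omega

lemma Acnt_succ (S : ℕ → Ω → Vertex) (n : ℕ) (ω : Ω) :
    Acnt S (n+1) ω = Acnt S n ω + (if S (n+1) ω = ([] : Vertex) then 1 else 0) := by
  unfold Acnt
  rw [show Finset.Icc 1 (n+1) = insert (n+1) (Finset.Icc 1 n) by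
    rw [← Finset.insert_Icc_right_eq_Icc_add_one (by omega)], Finset.filter_insert]
  split
  · rw [Finset.card_insert_of_notMem (by simp)]
  · omega

lemma crossCount_succ (S : ℕ → Ω → Vertex) (n : ℕ) (ω : Ω) :
    crossCount S (n+1) ω = crossCount S n ω
      + (if S n ω = ([] : Vertex) ∧ S (n+1) ω = ([] : Vertex) then 1 else 0) := by
  unfold crossCount
  rw [show Finset.Icc 1 (n+1) = insert (n+1) (Finset.Icc 1 n) by
    rw [← Finset.insert_Icc_right_eq_Icc_add_one (by omega)], Finset.filter_insert]
  simp only [Nat.add_sub_cancel]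
  by_cases hc : S n ω = ([] : Vertex) ∧ S (n+1) ω = ([] : Vertex)
  · rw [if_pos hc, if_pos hc, Finset.card_insert_of_notMem (by simp)]
  · rw [if_neg hc, if_neg hc, add_zero]

lemma crossCount_zero (S : ℕ → Ω → Vertex) (ω : Ω) : crossCount S 0 ω = 0 := by
  unfold crossCount; simp

lemma Acnt_zero (S : ℕ → Ω → Vertex) (ω : Ω) : Acnt S 0 ω = 0 := by
  unfold Acnt; simp

lemma Gcnt_mono (S : ℕ → Ω → Vertex) (ξ : ℕ → Ω → ℕ) {m n : ℕ} (hmn : m ≤ n) (ω : Ω) :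
    Gcnt S ξ m ω ≤ Gcnt S ξ n ω :=
  Finset.card_le_card (Finset.filter_subset_filter _ (Finset.range_subset_range.2 (by omega)))

lemma Acnt_mono (S : ℕ → Ω → Vertex) {m n : ℕ} (hmn : m ≤ n) (ω : Ω) :
    Acnt S m ω ≤ Acnt S n ω :=
  Finset.card_le_card (Finset.filter_subset_filter _ (Finset.Icc_subset_Icc_right hmn))

lemma crossCount_mono (S : ℕ → Ω → Vertex) {m n : ℕ} (hmn : m ≤ n) (ω : Ω) :
    crossCount S m ω ≤ crossCount S n ω :=
  Finset.card_le_card (Finset.filter_subset_filter _ (Finset.Icc_subset_Icc_right hmn))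

lemma Gcnt_le_nChild (h : IsTBRW ρ ν P T S ξ) (n : ℕ) (ω : Ω) :
    Gcnt S ξ n ω ≤ nChild (T (n+1) ω) ([] : Vertex) := by
  rw [nChild_root h]
  unfold Gcnt
  rw [Finset.card_filter]
  refine Finset.sum_le_sum (fun j _ => ?_)
  by_cases h1 : S j ω = ([] : Vertex) ∧ 1 ≤ ξ j ω
  · rw [if_pos h1, if_pos h1.1]; exact h1.2
  · rw [if_neg h1]; omega

/-- Predictable bound for the probability of crossing the root loop at step `n+1`. -/
noncomputable def pE (ρ : ℝ) (S : ℕ → Ω → Vertex) (ξ : ℕ → Ω → ℕ) (n : ℕ) (ω : Ω) : ℝ≥0∞ :=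
  if S n ω = ([] : Vertex) then ENNReal.ofReal (ρ / (Gcnt S ξ n ω + ρ)) else 0

lemma pE_le_one (hρ : 0 < ρ) (n : ℕ) (ω : Ω) : pE ρ S ξ n ω ≤ 1 := by
  unfold pE
  split
  · rw [show (1 : ℝ≥0∞) = ENNReal.ofReal 1 by simp]
    apply ENNReal.ofReal_le_ofReal
    rw [div_le_one (by positivity)]
    nlinarith [Nat.cast_nonneg (α := ℝ) (Gcnt S ξ n ω)]
  · exact zero_le_one

/-- The main supermartingale. -/
noncomputable def Uproc (ρ : ℝ) (S : ℕ → Ω → Vertex) (ξ : ℕ → Ω → ℕ) (n : ℕ) (ω : Ω) : ℝ≥0∞ :=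
  2 ^ crossCount S n ω * (∏ j ∈ Finset.range n, (1 + pE ρ S ξ j ω))⁻¹



/-! ### Measurability infrastructure -/

instance : MeasurableSingletonClass Vertex := ⟨fun _ => MeasurableSpace.measurableSet_top⟩

instance : MeasurableSingletonClass (Finset Vertex) := ⟨fun _ => MeasurableSpace.measurableSet_top⟩

lemma measurableSet_all {α : Type*} [MeasurableSpace α] [Countable α]
    [MeasurableSingletonClass α] (s : Set α) : MeasurableSet s :=
  (Set.to_countable s).measurableSet

instance (n : ℕ) : MeasurableSingletonClass (Fin n → Vertex × ℕ) :=
  ⟨fun f => by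
    have hf : ({f} : Set (Fin n → Vertex × ℕ)) = ⋂ j, (fun g => g j) ⁻¹' {f j} := by
      ext g
      simp only [Set.mem_singleton_iff, Set.mem_iInter, Set.mem_preimage, funext_iff]
    rw [hf]
    exact MeasurableSet.iInter fun j => measurable_pi_apply j (measurableSet_singleton _)⟩

/-- The full history (positions and leaf counts) up to time `n`. -/
def Hst (S : ℕ → Ω → Vertex) (ξ : ℕ → Ω → ℕ) (n : ℕ) (ω : Ω) : Fin (n+1) → Vertex × ℕ :=
  fun j => (S j ω, ξ j ω)

lemma measurable_Hst (h : IsTBRW ρ ν P T S ξ) (n : ℕ) : Measurable (Hst S ξ n) :=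
  measurable_pi_lambda _ fun j => ((h.measS j).prodMk (h.measξ j))

lemma comap_S_le_hist {i n : ℕ} (hin : i ≤ n) :
    MeasurableSpace.comap (S i) ⊤ ≤ hist T S ξ n := by
  refine le_trans (le_sup_of_le_left (le_sup_right)) (le_biSup
    (fun i => (MeasurableSpace.comap (T i) ⊤ ⊔ MeasurableSpace.comap (S i) ⊤ ⊔
      MeasurableSpace.comap (ξ i) ⊤)) (Finset.mem_range.2 (by omega)))

lemma comap_xi_le_hist {i n : ℕ} (hin : i ≤ n) :
    MeasurableSpace.comap (ξ i) ⊤ ≤ hist T S ξ n := by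
  refine le_trans le_sup_right (le_biSup
    (fun i => (MeasurableSpace.comap (T i) ⊤ ⊔ MeasurableSpace.comap (S i) ⊤ ⊔
      MeasurableSpace.comap (ξ i) ⊤)) (Finset.mem_range.2 (by omega)))

lemma comap_S_le_histBefore {i n : ℕ} (hin : i ≤ n) :
    MeasurableSpace.comap (S i) ⊤ ≤ histBefore T S ξ n := by
  refine le_trans ?_ le_sup_left
  refine le_trans le_sup_right (le_biSup
    (fun i => (MeasurableSpace.comap (T i) ⊤ ⊔ MeasurableSpace.comap (S i) ⊤))
    (Finset.mem_range.2 (by omega)))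

lemma comap_xi_le_histBefore {i n : ℕ} (hin : i < n) :
    MeasurableSpace.comap (ξ i) ⊤ ≤ histBefore T S ξ n := by
  refine le_trans ?_ le_sup_right
  exact le_biSup (fun i => MeasurableSpace.comap (ξ i) ⊤) (Finset.mem_range.2 (by omega))

lemma measurableSet_comap_top {α : Type*} (f : Ω → α) (B : Set α) :
    MeasurableSet[MeasurableSpace.comap f ⊤] (f ⁻¹' B) :=
  ⟨B, trivial, rfl⟩

lemma hist_le (h : IsTBRW ρ ν P T S ξ) (n : ℕ) :
    hist T S ξ n ≤ (inferInstance : MeasurableSpace Ω) := by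
  refine iSup₂_le fun i _ => ?_
  refine sup_le (sup_le ?_ ?_) ?_
  · exact measurable_iff_comap_le.1 (h.measT i)
  · exact measurable_iff_comap_le.1 (h.measS i)
  · exact measurable_iff_comap_le.1 (h.measξ i)

lemma histBefore_le (h : IsTBRW ρ ν P T S ξ) (n : ℕ) :
    histBefore T S ξ n ≤ (inferInstance : MeasurableSpace Ω) := by
  refine sup_le (iSup₂_le fun i _ => sup_le ?_ ?_) (iSup₂_le fun i _ => ?_)
  · exact measurable_iff_comap_le.1 (h.measT i)
  · exact measurable_iff_comap_le.1 (h.measS i)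
  · exact measurable_iff_comap_le.1 (h.measξ i)

lemma hist_le_histBefore_succ (n : ℕ) :
    hist T S ξ n ≤ histBefore T S ξ (n+1) := by
  refine iSup₂_le fun i hi => ?_
  rw [Finset.mem_range] at hi
  refine sup_le (sup_le ?_ ?_) ?_
  · refine le_trans ?_ (le_sup_left :
      _ ≤ (⨆ i ∈ Finset.range (n + 1 + 1),
        (MeasurableSpace.comap (T i) ⊤ ⊔ MeasurableSpace.comap (S i) ⊤)) ⊔ _)
    refine le_trans le_sup_left (le_biSup
      (fun i => (MeasurableSpace.comap (T i) ⊤ ⊔ MeasurableSpace.comap (S i) ⊤))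
      (Finset.mem_range.2 (by omega)))
  · exact comap_S_le_histBefore (by omega)
  · exact comap_xi_le_histBefore (by omega)

lemma measurableSet_fiber_hist (n : ℕ) (s : Fin (n+1) → Vertex × ℕ) :
    MeasurableSet[hist T S ξ n] (Hst S ξ n ⁻¹' {s}) := by
  have hf : Hst S ξ n ⁻¹' {s}
      = ⋂ j : Fin (n+1), ((S j ⁻¹' {(s j).1}) ∩ (ξ j ⁻¹' {(s j).2})) := by
    ext ω
    simp only [Set.mem_preimage, Set.mem_singleton_iff, Set.mem_iInter, Set.mem_inter_iff,
      funext_iff, Hst, Prod.ext_iff]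
  rw [hf]
  exact MeasurableSet.iInter fun j =>
    ((comap_S_le_hist (Nat.lt_succ_iff.1 j.isLt) _ (measurableSet_comap_top _ _)).inter
      (comap_xi_le_hist (Nat.lt_succ_iff.1 j.isLt) _ (measurableSet_comap_top _ _)))

lemma measurableSet_fiber_histBefore (n : ℕ) (s : Fin (n+1) → Vertex × ℕ) :
    MeasurableSet[histBefore T S ξ (n+1)] (Hst S ξ n ⁻¹' {s}) :=
  hist_le_histBefore_succ n _ (measurableSet_fiber_hist n s)

lemma measurableSet_S_histBefore (n : ℕ) (B : Set Vertex) :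
    MeasurableSet[histBefore T S ξ n] (S n ⁻¹' B) :=
  comap_S_le_histBefore le_rfl _ (measurableSet_comap_top _ _)

/-! ### The two elementary step estimates -/

/-- The conditional law of `ξ n` given the strict past is `ν`. -/
lemma step_xi (h : IsTBRW ρ ν P T S ξ) (n : ℕ) {H : Set Ω}
    (hH : MeasurableSet[histBefore T S ξ n] H) (B : Set ℕ) :
    P (H ∩ ξ n ⁻¹' B) = ν.toMeasure B * P H := by
  have hkey := (ProbabilityTheory.Indep_iff _ _ P).1 (h.ξ_indep n) (ξ n ⁻¹' B) H
    (measurableSet_comap_top _ _) hH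
  rw [Set.inter_comm, hkey]
  congr 1
  rw [← h.ξ_law n, Measure.map_apply (h.measξ n) (measurableSet_all B)]

/-- The probability of crossing the root loop at step `n+1` is at most
`ρ/(g+ρ)` on any past event on which the root has at least `g` children. -/
lemma step_father_le (h : IsTBRW ρ ν P T S ξ) (hρ : 0 < ρ) (n : ℕ) {H : Set Ω}
    (hH : MeasurableSet[hist T S ξ n] H)
    (hroot : ∀ ω ∈ H, S n ω = ([] : Vertex)) {g : ℕ}
    (hg : ∀ ω ∈ H, g ≤ nChild (T (n+1) ω) (S n ω)) :
    P (H ∩ {ω | S (n+1) ω = ([] : Vertex)})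
      ≤ ENNReal.ofReal (ρ / (g + ρ)) * P H := by
  classical
  have hHm : MeasurableSet H := hist_le h n H hH
  have hmeasN : ∀ k : ℕ, MeasurableSet {ω | nChild (T (n + 1) ω) (S n ω) = k} := by
    intro k
    have : {ω | nChild (T (n + 1) ω) (S n ω) = k}
        = (fun ω => (T (n+1) ω, S n ω)) ⁻¹' {p | nChild p.1 p.2 = k} := rfl
    rw [this]
    exact ((h.measT (n+1)).prodMk (h.measS n)) (measurableSet_all _)
  have hmeasP : MeasurableSet {ω | S (n+1) ω = parent (S n ω)} := by
    have : {ω | S (n+1) ω = parent (S n ω)}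
        = (fun ω => (S (n+1) ω, S n ω)) ⁻¹' {p | p.1 = parent p.2} := rfl
    rw [this]
    exact ((h.measS (n+1)).prodMk (h.measS n)) (measurableSet_all _)
  set A : ℕ → Set Ω := fun k => H ∩ {ω | nChild (T (n + 1) ω) (S n ω) = k} ∩
      {ω | S (n + 1) ω = parent (S n ω)} with hA
  have hcover : H ∩ {ω | S (n+1) ω = ([] : Vertex)} = ⋃ k, A k := by
    ext ω
    constructor
    · rintro ⟨hω, hs⟩
      refine Set.mem_iUnion.2 ⟨nChild (T (n+1) ω) (S n ω), ⟨⟨hω, rfl⟩, ?_⟩⟩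
      show S (n+1) ω = parent (S n ω)
      rw [hroot ω hω]
      exact hs
    · rintro hω
      obtain ⟨k, ⟨⟨hω1, _⟩, hω3⟩⟩ := Set.mem_iUnion.1 hω
      refine ⟨hω1, ?_⟩
      show S (n+1) ω = ([] : Vertex)
      have := hroot ω hω1
      rw [Set.mem_setOf_eq] at hω3
      rw [hω3, this]
      rfl
  have hdisj : Pairwise (Function.onFun Disjoint A) := by
    intro k k' hkk'
    rw [Function.onFun, Set.disjoint_left]
    rintro ω ⟨⟨_, hk⟩, _⟩ ⟨⟨_, hk'⟩, _⟩
    rw [Set.mem_setOf_eq] at hk hk'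
    exact hkk' (hk ▸ hk')
  have hmeasA : ∀ k, MeasurableSet (A k) := fun k =>
    (hHm.inter (hmeasN k)).inter hmeasP
  rw [hcover, measure_iUnion hdisj hmeasA]
  have hterm : ∀ k, P (A k) ≤ ENNReal.ofReal (ρ / (g + ρ))
      * P (H ∩ {ω | nChild (T (n + 1) ω) (S n ω) = k}) := by
    intro k
    rw [hA]
    rw [h.step_father n k H hH]
    rcases lt_or_ge k g with hk | hk
    · have : H ∩ {ω | nChild (T (n + 1) ω) (S n ω) = k} = ∅ := by
        ext ω
        simp only [Set.mem_inter_iff, Set.mem_setOf_eq, Set.mem_empty_iff_false, iff_false]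
        rintro ⟨hω, hnc⟩
        exact absurd (hg ω hω) (by omega)
      rw [this]
      simp
    · refine mul_le_mul_left (ENNReal.ofReal_le_ofReal ?_) _
      apply div_le_div_of_nonneg_left hρ.le (by positivity)
      have : (g : ℝ) ≤ (k : ℝ) := Nat.cast_le.2 hk
      linarith
  refine le_trans (ENNReal.tsum_le_tsum hterm) ?_
  rw [ENNReal.tsum_mul_left]
  refine mul_le_mul_right ?_ _
  have hcover2 : (⋃ k, H ∩ {ω | nChild (T (n + 1) ω) (S n ω) = k}) = H := by
    ext ω
    simp only [Set.mem_iUnion, Set.mem_inter_iff, Set.mem_setOf_eq]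
    exact ⟨fun ⟨k, hk, _⟩ => hk, fun hω => ⟨_, hω, rfl⟩⟩
  rw [← measure_iUnion ?_ (fun k => hHm.inter (hmeasN k)), hcover2]
  intro k k' hkk'
  rw [Function.onFun, Set.disjoint_left]
  rintro ω ⟨_, hk⟩ ⟨_, hk'⟩
  rw [Set.mem_setOf_eq] at hk hk'
  exact hkk' (hk ▸ hk')



/-! ### Decomposition of integrals over history fibers -/

/-- `F` is determined by the history (positions and leaf counts) up to time `n`. -/
def Det (S : ℕ → Ω → Vertex) (ξ : ℕ → Ω → ℕ) (n : ℕ) (F : Ω → ℝ≥0∞) : Prop :=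
  ∀ ω ω', (∀ j ≤ n, S j ω = S j ω' ∧ ξ j ω = ξ j ω') → F ω = F ω'

lemma det_congr_fiber {n : ℕ} {F : Ω → ℝ≥0∞} (hF : Det S ξ n F) {ω ω' : Ω}
    (hh : Hst S ξ n ω = Hst S ξ n ω') : F ω = F ω' := by
  apply hF
  intro j hj
  have := congrFun hh ⟨j, by omega⟩
  simpa [Hst, Prod.ext_iff] using this

/-- The (constant) value of a history-determined function on a history fiber. -/
noncomputable def fibVal (S : ℕ → Ω → Vertex) (ξ : ℕ → Ω → ℕ) (n : ℕ) (F : Ω → ℝ≥0∞)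
    (s : Fin (n+1) → Vertex × ℕ) : ℝ≥0∞ :=
  ⨆ ω ∈ Hst S ξ n ⁻¹' {s}, F ω

lemma fibVal_eq {n : ℕ} {F : Ω → ℝ≥0∞} (hF : Det S ξ n F)
    {s : Fin (n+1) → Vertex × ℕ} {ω : Ω} (hω : Hst S ξ n ω = s) :
    fibVal S ξ n F s = F ω := by
  refine le_antisymm (iSup₂_le fun ω' hω' => ?_) ?_
  · rw [Set.mem_preimage, Set.mem_singleton_iff] at hω'
    exact (det_congr_fiber hF (hω'.trans hω.symm)).le
  · exact le_iSup₂ (f := fun (ω : Ω) (_ : ω ∈ Hst S ξ n ⁻¹' {s}) => F ω) ω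
      (by rw [Set.mem_preimage, Set.mem_singleton_iff]; exact hω)

lemma measurableSet_fiber_amb (h : IsTBRW ρ ν P T S ξ) (n : ℕ)
    (s : Fin (n+1) → Vertex × ℕ) : MeasurableSet (Hst S ξ n ⁻¹' {s}) :=
  hist_le h n _ (measurableSet_fiber_hist n s)

/-- Master decomposition of an integral of a history-determined function against an
indicator, as a sum over history fibers. -/
lemma lint_det_mul_indicator (h : IsTBRW ρ ν P T S ξ) {n : ℕ} {F : Ω → ℝ≥0∞}
    (hF : Det S ξ n F) {B : Set Ω} (hB : MeasurableSet B) :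
    ∫⁻ ω, F ω * B.indicator 1 ω ∂P
      = ∑' s : Fin (n+1) → Vertex × ℕ, fibVal S ξ n F s * P (Hst S ξ n ⁻¹' {s} ∩ B) := by
  have hfib : ∀ s : Fin (n+1) → Vertex × ℕ, MeasurableSet (Hst S ξ n ⁻¹' {s}) :=
    measurableSet_fiber_amb h n
  have hpt : ∀ ω, F ω * B.indicator 1 ω
      = ∑' s : Fin (n+1) → Vertex × ℕ,
          fibVal S ξ n F s * (Hst S ξ n ⁻¹' {s} ∩ B).indicator 1 ω := by
    intro ω
    rw [tsum_eq_single (Hst S ξ n ω) ?_]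
    · rw [fibVal_eq hF rfl]
      by_cases hωB : ω ∈ B
      · rw [Set.indicator_of_mem hωB, Set.indicator_of_mem]
        exact ⟨by rw [Set.mem_preimage, Set.mem_singleton_iff], hωB⟩
      · rw [Set.indicator_of_notMem hωB, Set.indicator_of_notMem (fun hc => hωB hc.2)]
    · intro s hs
      rw [Set.indicator_of_notMem, mul_zero]
      rintro ⟨hs1, _⟩
      rw [Set.mem_preimage, Set.mem_singleton_iff] at hs1
      exact hs hs1.symm
  rw [lintegral_congr hpt, lintegral_tsum
    (fun s => ((measurable_one.indicator ((hfib s).inter hB)).const_mul _).aemeasurable)]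
  congr 1
  funext s
  rw [lintegral_const_mul _ (measurable_one.indicator ((hfib s).inter hB)),
    lintegral_indicator_one ((hfib s).inter hB)]

lemma lint_det (h : IsTBRW ρ ν P T S ξ) {n : ℕ} {F : Ω → ℝ≥0∞} (hF : Det S ξ n F) :
    ∫⁻ ω, F ω ∂P
      = ∑' s : Fin (n+1) → Vertex × ℕ, fibVal S ξ n F s * P (Hst S ξ n ⁻¹' {s}) := by
  have := lint_det_mul_indicator h hF (B := Set.univ) MeasurableSet.univ
  simpa using this



/-! ### History-determined processes -/

lemma crossCount_congr {n : ℕ} {ω ω' : Ω} (hh : ∀ j ≤ n, S j ω = S j ω') :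
    crossCount S n ω = crossCount S n ω' := by
  unfold crossCount
  congr 1
  apply Finset.filter_congr
  intro i hi
  rw [Finset.mem_Icc] at hi
  rw [hh (i-1) (by omega), hh i (by omega)]

lemma Gcnt_congr {n : ℕ} {ω ω' : Ω} (hh : ∀ j ≤ n, S j ω = S j ω' ∧ ξ j ω = ξ j ω') :
    Gcnt S ξ n ω = Gcnt S ξ n ω' := by
  unfold Gcnt
  congr 1
  apply Finset.filter_congr
  intro i hi
  rw [Finset.mem_range] at hi
  rw [(hh i (by omega)).1, (hh i (by omega)).2]

lemma Acnt_congr {n : ℕ} {ω ω' : Ω} (hh : ∀ j ≤ n, S j ω = S j ω') :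
    Acnt S n ω = Acnt S n ω' := by
  unfold Acnt
  congr 1
  apply Finset.filter_congr
  intro i hi
  rw [Finset.mem_Icc] at hi
  rw [hh i (by omega)]

lemma pE_congr {n j : ℕ} (hjn : j ≤ n) {ω ω' : Ω}
    (hh : ∀ i ≤ n, S i ω = S i ω' ∧ ξ i ω = ξ i ω') :
    pE ρ S ξ j ω = pE ρ S ξ j ω' := by
  unfold pE
  rw [(hh j hjn).1, Gcnt_congr (fun i hi => hh i (by omega))]

/-! ### The two integral step estimates -/

/-- Conditionally on the past, `ξ (n+1)` is `ν`-distributed even given `S (n+1)`. -/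
lemma lint_det_xi (h : IsTBRW ρ ν P T S ξ) {n : ℕ} {F : Ω → ℝ≥0∞} (hF : Det S ξ n F)
    {B : Set Ω} (hBmeas : MeasurableSet[histBefore T S ξ (n+1)] B) (B' : Set ℕ) :
    ∫⁻ ω, F ω * (B ∩ ξ (n+1) ⁻¹' B').indicator 1 ω ∂P
      = ν.toMeasure B' * ∫⁻ ω, F ω * B.indicator 1 ω ∂P := by
  have hBamb : MeasurableSet B := histBefore_le h (n+1) B hBmeas
  rw [lint_det_mul_indicator h hF (hBamb.inter ((h.measξ (n+1)) (measurableSet_all B'))),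
      lint_det_mul_indicator h hF hBamb, ← ENNReal.tsum_mul_left]
  congr 1
  funext s
  rw [← Set.inter_assoc,
    step_xi h (n+1) ((measurableSet_fiber_histBefore n s).inter hBmeas) B']
  ring

/-- The crossing estimate: integrating a past-determined functional against the
crossing indicator is dominated by integrating it against the predictable bound `pE`. -/
lemma lint_cross_le (h : IsTBRW ρ ν P T S ξ) (hρ : 0 < ρ) {n : ℕ} {F : Ω → ℝ≥0∞}
    (hF : Det S ξ n F) :
    ∫⁻ ω, F ω * ({ω | S n ω = ([] : Vertex)} ∩ {ω | S (n+1) ω = ([] : Vertex)}).indicator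
        1 ω ∂P
      ≤ ∫⁻ ω, F ω * pE ρ S ξ n ω ∂P := by
  classical
  set F' : Ω → ℝ≥0∞ := fun ω => F ω * ({ω | S n ω = ([] : Vertex)}).indicator 1 ω with hF'
  have hdet' : Det S ξ n F' := by
    intro ω ω' hh
    simp only [hF']
    rw [hF ω ω' hh]
    congr 1
    simp only [Set.indicator_apply, Set.mem_setOf_eq, (hh n le_rfl).1, Pi.one_apply]
  have hdet2 : Det S ξ n (fun ω => F ω * pE ρ S ξ n ω) := by
    intro ω ω' hh
    show F ω * pE ρ S ξ n ω = F ω' * pE ρ S ξ n ω'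
    rw [hF ω ω' hh, pE_congr le_rfl hh]
  have hLHS : (fun ω => F ω * ({ω | S n ω = ([] : Vertex)} ∩
        {ω | S (n+1) ω = ([] : Vertex)}).indicator 1 ω)
      = fun ω => F' ω * ({ω | S (n+1) ω = ([] : Vertex)}).indicator 1 ω := by
    funext ω
    simp only [hF']
    by_cases h1 : S n ω = ([] : Vertex) <;> by_cases h2 : S (n+1) ω = ([] : Vertex) <;>
      simp [Set.indicator_apply, h1, h2]
  have hB1 : MeasurableSet {ω | S (n+1) ω = ([] : Vertex)} := by
    have : {ω | S (n+1) ω = ([] : Vertex)} = S (n+1) ⁻¹' {([] : Vertex)} := rfl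
    rw [this]; exact (h.measS (n+1)) (measurableSet_all _)
  have hre : ∫⁻ ω, F ω * ({ω | S n ω = ([] : Vertex)} ∩
        {ω | S (n+1) ω = ([] : Vertex)}).indicator 1 ω ∂P
      = ∫⁻ ω, F' ω * ({ω | S (n+1) ω = ([] : Vertex)}).indicator 1 ω ∂P :=
    lintegral_congr (fun ω => congrFun hLHS ω)
  rw [hre, lint_det_mul_indicator h hdet' hB1, lint_det h hdet2]
  refine ENNReal.tsum_le_tsum (fun s => ?_)
  by_cases hfib : ∃ ω₀, Hst S ξ n ω₀ = s
  · obtain ⟨ω₀, hω₀⟩ := hfib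
    rw [fibVal_eq hdet' hω₀, fibVal_eq hdet2 hω₀]
    have hfibeq : ∀ ω ∈ Hst S ξ n ⁻¹' {s}, ∀ j ≤ n, S j ω = S j ω₀ ∧ ξ j ω = ξ j ω₀ := by
      intro ω hω j hj
      rw [Set.mem_preimage, Set.mem_singleton_iff] at hω
      have := congrFun (hω.trans hω₀.symm) ⟨j, by omega⟩
      simpa [Hst, Prod.ext_iff] using this
    by_cases hroot : S n ω₀ = ([] : Vertex)
    · have hF'eq : F' ω₀ = F ω₀ := by
        simp only [hF', Set.indicator_apply, Set.mem_setOf_eq, if_pos hroot, Pi.one_apply,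
          mul_one]
      rw [hF'eq]
      have hstep : P (Hst S ξ n ⁻¹' {s} ∩ {ω | S (n+1) ω = ([] : Vertex)})
          ≤ ENNReal.ofReal (ρ / (Gcnt S ξ n ω₀ + ρ)) * P (Hst S ξ n ⁻¹' {s}) := by
        refine step_father_le h hρ n (measurableSet_fiber_hist n s) ?_ ?_
        · intro ω hω
          rw [(hfibeq ω hω n le_rfl).1]
          exact hroot
        · intro ω hω
          rw [(hfibeq ω hω n le_rfl).1, hroot]
          rw [← Gcnt_congr (hfibeq ω hω)]
          exact Gcnt_le_nChild h n ω
      calc F ω₀ * P (Hst S ξ n ⁻¹' {s} ∩ {ω | S (n+1) ω = ([] : Vertex)})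
          ≤ F ω₀ * (ENNReal.ofReal (ρ / (Gcnt S ξ n ω₀ + ρ)) * P (Hst S ξ n ⁻¹' {s})) :=
            mul_le_mul_right hstep _
        _ = F ω₀ * pE ρ S ξ n ω₀ * P (Hst S ξ n ⁻¹' {s}) := by
            unfold pE
            rw [if_pos hroot, mul_assoc]
    · have hF'eq : F' ω₀ = 0 := by
        simp only [hF', Set.indicator_apply, Set.mem_setOf_eq, if_neg hroot, mul_zero]
      rw [hF'eq, zero_mul]
      exact zero_le
  · have hempty : Hst S ξ n ⁻¹' {s} = ∅ := by
      ext ω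
      simp only [Set.mem_preimage, Set.mem_singleton_iff, Set.mem_empty_iff_false, iff_false]
      exact fun hc => hfib ⟨ω, hc⟩
    rw [hempty]
    simp



/-! ### The crossing supermartingale -/

lemma det_measurable (h : IsTBRW ρ ν P T S ξ) {n : ℕ} {F : Ω → ℝ≥0∞}
    (hF : Det S ξ n F) : Measurable F := by
  have hfe : F = (fun s => fibVal S ξ n F s) ∘ Hst S ξ n := by
    funext ω
    exact (fibVal_eq hF rfl).symm
  rw [hfe]
  exact (measurable_of_countable _).comp (measurable_Hst h n)

lemma one_le_one_add_pE (n : ℕ) (ω : Ω) : (1 : ℝ≥0∞) ≤ 1 + pE ρ S ξ n ω := le_self_add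

lemma prod_pE_ne_zero (n : ℕ) (ω : Ω) :
    (∏ j ∈ Finset.range n, (1 + pE ρ S ξ j ω)) ≠ 0 := by
  refine ne_of_gt (lt_of_lt_of_le zero_lt_one (Finset.one_le_prod' ?_))
  exact fun j _ => one_le_one_add_pE j ω

lemma prod_pE_ne_top (hρ : 0 < ρ) (n : ℕ) (ω : Ω) :
    (∏ j ∈ Finset.range n, (1 + pE ρ S ξ j ω)) ≠ ⊤ := by
  refine (lt_of_le_of_lt (Finset.prod_le_prod' (g := fun _ => (2:ℝ≥0∞)) ?_) ?_).ne
  · intro j _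
    calc 1 + pE ρ S ξ j ω ≤ 1 + 1 := add_le_add_right (pE_le_one hρ j ω) 1
    _ = 2 := one_add_one_eq_two
  · rw [Finset.prod_const]
    exact ENNReal.pow_lt_top (by norm_num)

lemma det_Uaux (hρ : 0 < ρ) (n m : ℕ) (hmn : m ≤ n) :
    Det S ξ n (fun ω => (2:ℝ≥0∞) ^ crossCount S m ω
      * (∏ j ∈ Finset.range (n+1), (1 + pE ρ S ξ j ω))⁻¹) := by
  intro ω ω' hh
  simp only
  rw [crossCount_congr (fun j hj => (hh j (by omega)).1)]
  congr 2
  exact Finset.prod_congr rfl (fun j hj => by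
    rw [pE_congr (Nat.lt_succ_iff.1 (Finset.mem_range.1 hj)) hh])

lemma lint_U_succ_le (h : IsTBRW ρ ν P T S ξ) (hρ : 0 < ρ) (n : ℕ) :
    ∫⁻ ω, Uproc ρ S ξ (n+1) ω ∂P ≤ ∫⁻ ω, Uproc ρ S ξ n ω ∂P := by
  classical
  set ψ : Ω → ℝ≥0∞ := fun ω => (2:ℝ≥0∞) ^ crossCount S n ω
      * (∏ j ∈ Finset.range (n+1), (1 + pE ρ S ξ j ω))⁻¹ with hψ
  have hdetψ : Det S ξ n ψ := det_Uaux hρ n n le_rfl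
  have hmeasψ : Measurable ψ := det_measurable h hdetψ
  have hBmeas : MeasurableSet ({ω | S n ω = ([] : Vertex)} ∩
      {ω | S (n+1) ω = ([] : Vertex)}) := by
    refine MeasurableSet.inter ?_ ?_
    · exact (h.measS n) (measurableSet_all ({([] : Vertex)} : Set Vertex))
    · exact (h.measS (n+1)) (measurableSet_all ({([] : Vertex)} : Set Vertex))
  have hpt : ∀ ω, Uproc ρ S ξ (n+1) ω
      = ψ ω + ψ ω * ({ω | S n ω = ([] : Vertex)} ∩
          {ω | S (n+1) ω = ([] : Vertex)}).indicator 1 ω := by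
    intro ω
    unfold Uproc
    rw [crossCount_succ]
    by_cases hc : S n ω = ([] : Vertex) ∧ S (n+1) ω = ([] : Vertex)
    · rw [if_pos hc, Set.indicator_of_mem (by exact ⟨hc.1, hc.2⟩), hψ]
      simp only [Pi.one_apply, mul_one, pow_add, pow_one]
      ring
    · rw [if_neg hc, Set.indicator_of_notMem (by exact fun hm => hc ⟨hm.1, hm.2⟩), hψ]
      simp only [mul_zero, add_zero, Nat.add_zero]
  have hstep : ∫⁻ ω, ψ ω * ({ω | S n ω = ([] : Vertex)} ∩
      {ω | S (n+1) ω = ([] : Vertex)}).indicator 1 ω ∂P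
      ≤ ∫⁻ ω, ψ ω * pE ρ S ξ n ω ∂P := lint_cross_le h hρ hdetψ
  have hfin : ∀ ω, ψ ω * (1 + pE ρ S ξ n ω) = Uproc ρ S ξ n ω := by
    intro ω
    rw [hψ]
    simp only
    unfold Uproc
    rw [Finset.prod_range_succ, mul_assoc]
    congr 1
    rw [ENNReal.mul_inv (Or.inl (prod_pE_ne_zero n ω))
      (Or.inr (ne_of_gt (lt_of_lt_of_le zero_lt_one (one_le_one_add_pE n ω)))), mul_assoc,
      ENNReal.inv_mul_cancel (ne_of_gt (lt_of_lt_of_le zero_lt_one (one_le_one_add_pE n ω)))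
        (by
          refine ne_of_lt (lt_of_le_of_lt (add_le_add_right (pE_le_one hρ n ω) 1) ?_)
          rw [one_add_one_eq_two]
          exact ENNReal.ofNat_lt_top), mul_one]
  calc ∫⁻ ω, Uproc ρ S ξ (n+1) ω ∂P
      = ∫⁻ ω, ψ ω + ψ ω * ({ω | S n ω = ([] : Vertex)} ∩
          {ω | S (n+1) ω = ([] : Vertex)}).indicator 1 ω ∂P := lintegral_congr hpt
    _ = (∫⁻ ω, ψ ω ∂P) + ∫⁻ ω, ψ ω * ({ω | S n ω = ([] : Vertex)} ∩
          {ω | S (n+1) ω = ([] : Vertex)}).indicator 1 ω ∂P :=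
        lintegral_add_left hmeasψ _
    _ ≤ (∫⁻ ω, ψ ω ∂P) + ∫⁻ ω, ψ ω * pE ρ S ξ n ω ∂P := add_le_add_right hstep _
    _ = ∫⁻ ω, ψ ω * (1 + pE ρ S ξ n ω) ∂P := by
        rw [← lintegral_add_left hmeasψ]
        exact lintegral_congr (fun ω => by rw [mul_add, mul_one])
    _ = ∫⁻ ω, Uproc ρ S ξ n ω ∂P := lintegral_congr hfin

lemma lint_U_le_one (h : IsTBRW ρ ν P T S ξ) (hρ : 0 < ρ) (n : ℕ) :
    ∫⁻ ω, Uproc ρ S ξ n ω ∂P ≤ 1 := by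
  haveI := h.prob
  induction n with
  | zero =>
    have : ∀ ω, Uproc ρ S ξ 0 ω = 1 := by
      intro ω
      unfold Uproc
      rw [crossCount_zero]
      simp
    rw [lintegral_congr this, lintegral_one, measure_univ]
  | succ n ih => exact le_trans (lint_U_succ_le h hρ n) ih



/-! ### The good-visits supermartingale -/

noncomputable def qE (ν : PMF ℕ) : ℝ≥0∞ := ν.toMeasure ({0}ᶜ)

noncomputable def betaE (ν : PMF ℕ) : ℝ≥0∞ := ν.toMeasure {0} + qE ν / 2

lemma pq_add (ν : PMF ℕ) : ν.toMeasure {0} + qE ν = 1 := by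
  haveI := PMF.toMeasure.isProbabilityMeasure ν
  rw [qE, measure_add_measure_compl (measurableSet_singleton 0), measure_univ]

lemma qE_ne_zero (hν0 : ν 0 < 1) : qE ν ≠ 0 := by
  intro hq
  have := pq_add ν
  rw [hq, add_zero, PMF.toMeasure_apply_singleton _ _ (measurableSet_singleton 0)] at this
  exact absurd this (ne_of_lt hν0)

lemma betaE_le_one (ν : PMF ℕ) : betaE ν ≤ 1 := by
  rw [← pq_add ν]
  exact add_le_add_right (ENNReal.half_le_self) _

lemma betaE_ne_top (ν : PMF ℕ) : betaE ν ≠ ⊤ :=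
  ne_of_lt (lt_of_le_of_lt (betaE_le_one ν) ENNReal.one_lt_top)

lemma betaE_ne_zero (hν0 : ν 0 < 1) : betaE ν ≠ 0 := by
  intro hb
  rw [betaE, add_eq_zero] at hb
  exact (ENNReal.div_eq_zero_iff.1 hb.2).elim (qE_ne_zero hν0) (by norm_num)

lemma betaE_lt_one (hν0 : ν 0 < 1) : betaE ν < 1 := by
  have hkey : betaE ν + qE ν / 2 = 1 := by
    rw [betaE, add_assoc, ENNReal.add_halves, pq_add]
  calc betaE ν < betaE ν + qE ν / 2 := by
        refine ENNReal.lt_add_right (betaE_ne_top ν) ?_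
        intro hq
        exact (ENNReal.div_eq_zero_iff.1 hq).elim (qE_ne_zero hν0) (by norm_num)
    _ = 1 := hkey

lemma betaE_key (hν0 : ν 0 < 1) :
    (betaE ν)⁻¹ * (2⁻¹ * qE ν + ν.toMeasure {0}) = 1 := by
  have : 2⁻¹ * qE ν + ν.toMeasure {0} = betaE ν := by
    rw [betaE, add_comm]
    congr 1
    rw [ENNReal.div_eq_inv_mul]
  rw [this]
  exact ENNReal.inv_mul_cancel (betaE_ne_zero hν0) (betaE_ne_top ν)

/-- One integral step for the good-visits supermartingale: conditionally on the past,
each arrival at the root is accompanied by a `ν`-distributed leaf count. -/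
lemma lint_N_fac (h : IsTBRW ρ ν P T S ξ) (hν0 : ν 0 < 1) {n : ℕ} {ψ : Ω → ℝ≥0∞}
    (hψ : Det S ξ n ψ) :
    ∫⁻ ω, ψ ω * (if S (n+1) ω = ([] : Vertex) then
        (betaE ν)⁻¹ * (if 1 ≤ ξ (n+1) ω then 2⁻¹ else 1) else 1) ∂P
      = ∫⁻ ω, ψ ω ∂P := by
  classical
  set B : Set Ω := {ω | S (n+1) ω = ([] : Vertex)} with hB
  have hBmeasb : MeasurableSet[histBefore T S ξ (n+1)] B :=
    measurableSet_S_histBefore (n+1) ({([] : Vertex)} : Set Vertex)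
  have hBamb : MeasurableSet B := histBefore_le h (n+1) B hBmeasb
  have hmeasψ : Measurable ψ := det_measurable h hψ
  have hm1 : Measurable fun ω => ψ ω * Bᶜ.indicator 1 ω :=
    hmeasψ.mul (measurable_one.indicator hBamb.compl)
  have hm2 : Measurable fun ω => ψ ω * (B ∩ ξ (n+1) ⁻¹' ({0}ᶜ)).indicator 1 ω :=
    hmeasψ.mul (measurable_one.indicator (hBamb.inter ((h.measξ (n+1)) (measurableSet_all _))))
  have hm3 : Measurable fun ω => ψ ω * (B ∩ ξ (n+1) ⁻¹' {0}).indicator 1 ω :=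
    hmeasψ.mul (measurable_one.indicator (hBamb.inter ((h.measξ (n+1)) (measurableSet_all _))))
  have hpt : ∀ ω, ψ ω * (if S (n+1) ω = ([] : Vertex) then
        (betaE ν)⁻¹ * (if 1 ≤ ξ (n+1) ω then 2⁻¹ else 1) else 1)
      = ψ ω * Bᶜ.indicator 1 ω
        + ((betaE ν)⁻¹ * 2⁻¹) * (ψ ω * (B ∩ ξ (n+1) ⁻¹' ({0}ᶜ)).indicator 1 ω)
        + (betaE ν)⁻¹ * (ψ ω * (B ∩ ξ (n+1) ⁻¹' {0}).indicator 1 ω) := by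
    intro ω
    by_cases hS : S (n+1) ω = ([] : Vertex)
    · rw [if_pos hS]
      by_cases hξ : 1 ≤ ξ (n+1) ω
      · rw [if_pos hξ]
        have hξ' : ξ (n+1) ω ∈ ({0}ᶜ : Set ℕ) := by simp; omega
        rw [Set.indicator_of_notMem (by simp [hB, hS] : ω ∉ Bᶜ),
          Set.indicator_of_mem (show ω ∈ B ∩ ξ (n+1) ⁻¹' ({0}ᶜ) from ⟨hS, hξ'⟩),
          Set.indicator_of_notMem (fun hc => by
            have := hc.2
            simp only [Set.mem_preimage, Set.mem_singleton_iff] at this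
            omega)]
        simp only [Pi.one_apply, mul_zero, mul_one, add_zero, zero_add, mul_zero]
        ring
      · rw [if_neg hξ]
        have hξ0 : ξ (n+1) ω = 0 := by omega
        rw [Set.indicator_of_notMem (by simp [hB, hS] : ω ∉ Bᶜ),
          Set.indicator_of_notMem (fun hc => by
            have := hc.2
            simp only [Set.mem_preimage, Set.mem_compl_iff, Set.mem_singleton_iff] at this
            omega),
          Set.indicator_of_mem (show ω ∈ B ∩ ξ (n+1) ⁻¹' {0} from ⟨hS, by simp [hξ0]⟩)]
        simp only [Pi.one_apply, mul_zero, mul_one, add_zero, zero_add]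
        ring
    · rw [if_neg hS]
      rw [Set.indicator_of_mem (by simp [hB, hS] : ω ∈ Bᶜ),
        Set.indicator_of_notMem (fun hc => hS hc.1),
        Set.indicator_of_notMem (fun hc => hS hc.1)]
      simp
  rw [lintegral_congr hpt]
  rw [lintegral_add_left (f := fun ω => ψ ω * Bᶜ.indicator 1 ω + (betaE ν)⁻¹ * 2⁻¹ * (ψ ω * (B ∩ ξ (n+1) ⁻¹' ({0}ᶜ)).indicator 1 ω)) (hm1.add ((hm2.const_mul _))) _]
  rw [lintegral_add_left hm1 _]
  rw [lintegral_const_mul _ hm2, lintegral_const_mul _ hm3]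
  rw [lint_det_xi h hψ hBmeasb ({0}ᶜ), lint_det_xi h hψ hBmeasb ({0} : Set ℕ)]
  have hcoeff : (betaE ν)⁻¹ * 2⁻¹ * (ν.toMeasure ({0}ᶜ) * ∫⁻ ω, ψ ω * B.indicator 1 ω ∂P)
      + (betaE ν)⁻¹ * (ν.toMeasure {0} * ∫⁻ ω, ψ ω * B.indicator 1 ω ∂P)
      = ∫⁻ ω, ψ ω * B.indicator 1 ω ∂P := by
    rw [← qE]
    calc (betaE ν)⁻¹ * 2⁻¹ * (qE ν * ∫⁻ ω, ψ ω * B.indicator 1 ω ∂P)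
        + (betaE ν)⁻¹ * (ν.toMeasure {0} * ∫⁻ ω, ψ ω * B.indicator 1 ω ∂P)
        = ((betaE ν)⁻¹ * (2⁻¹ * qE ν + ν.toMeasure {0}))
            * ∫⁻ ω, ψ ω * B.indicator 1 ω ∂P := by ring
      _ = ∫⁻ ω, ψ ω * B.indicator 1 ω ∂P := by rw [betaE_key hν0, one_mul]
  rw [add_assoc, hcoeff]
  rw [← lintegral_add_left hm1]
  refine lintegral_congr (fun ω => ?_)
  by_cases hS : ω ∈ B
  · rw [Set.indicator_of_notMem (by simp [hS]), Set.indicator_of_mem hS]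
    simp
  · rw [Set.indicator_of_mem (by simp [hS] : ω ∈ Bᶜ), Set.indicator_of_notMem hS]
    simp

/-- The good-visits supermartingale, stopped when the number of visits reaches `v`. -/
noncomputable def Nproc (ν : PMF ℕ) (S : ℕ → Ω → Vertex) (ξ : ℕ → Ω → ℕ) (n : ℕ)
    (ω : Ω) : ℝ≥0∞ :=
  (2⁻¹ : ℝ≥0∞) ^ (Gcnt S ξ n ω) * ((betaE ν)⁻¹) ^ (Acnt S n ω)

noncomputable def sigmaV (S : ℕ → Ω → Vertex) (v : ℕ) (ω : Ω) : ℕ :=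
  sInf {j | v ≤ Acnt S j ω}

noncomputable def NstProc (ν : PMF ℕ) (S : ℕ → Ω → Vertex) (ξ : ℕ → Ω → ℕ) (v n : ℕ)
    (ω : Ω) : ℝ≥0∞ :=
  if v ≤ Acnt S n ω then Nproc ν S ξ (sigmaV S v ω) ω else Nproc ν S ξ n ω

lemma sigmaV_le {v n : ℕ} {ω : Ω} (hv : v ≤ Acnt S n ω) : sigmaV S v ω ≤ n :=
  Nat.sInf_le hv

lemma Acnt_sigmaV {v n : ℕ} {ω : Ω} (hv : v ≤ Acnt S n ω) :
    v ≤ Acnt S (sigmaV S v ω) ω :=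
  Nat.sInf_mem (⟨n, hv⟩ : Set.Nonempty {j | v ≤ Acnt S j ω})

lemma sigmaV_succ_eq {v n : ℕ} {ω : Ω} (h1 : Acnt S n ω < v) (h2 : v ≤ Acnt S (n+1) ω) :
    sigmaV S v ω = n + 1 := by
  refine le_antisymm (Nat.sInf_le h2) ?_
  by_contra hcon
  push_neg at hcon
  have hle : sigmaV S v ω ≤ n := by omega
  have := Acnt_sigmaV h2
  have := Acnt_mono S hle ω
  omega

lemma Acnt_sigmaV_eq (hv : 1 ≤ v) {n : ℕ} {ω : Ω} (h2 : v ≤ Acnt S n ω) :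
    Acnt S (sigmaV S v ω) ω = v := by
  have hge := Acnt_sigmaV h2
  have hσ : sigmaV S v ω ≠ 0 := by
    intro h0
    rw [h0, Acnt_zero] at hge
    omega
  obtain ⟨m, hm⟩ := Nat.exists_eq_succ_of_ne_zero hσ
  have hlt : Acnt S m ω < v := by
    by_contra hcon
    push_neg at hcon
    have hmem : m ∈ {j | v ≤ Acnt S j ω} := hcon
    have hsle : sigmaV S v ω ≤ m := Nat.sInf_le hmem
    omega
  rw [hm] at hge ⊢
  have hge' : v ≤ Acnt S (m+1) ω := hge
  show Acnt S (m+1) ω = v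
  have hstep := Acnt_succ S m ω
  by_cases hs : S (m+1) ω = ([] : Vertex)
  · rw [hstep, if_pos hs] at hge' ⊢
    omega
  · rw [hstep, if_neg hs] at hge' ⊢
    omega



lemma det_Nproc {n m : ℕ} (hmn : m ≤ n) :
    Det S ξ n (fun ω => Nproc ν S ξ m ω) := by
  intro ω ω' hh
  show 2⁻¹ ^ Gcnt S ξ m ω * (betaE ν)⁻¹ ^ Acnt S m ω
      = 2⁻¹ ^ Gcnt S ξ m ω' * (betaE ν)⁻¹ ^ Acnt S m ω'
  rw [Gcnt_congr (fun j hj => hh j (by omega)),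
    Acnt_congr (fun j hj => (hh j (by omega)).1)]

lemma det_NF1 {v n : ℕ} :
    Det S ξ n (fun ω => if v ≤ Acnt S n ω then Nproc ν S ξ (sigmaV S v ω) ω else 0) := by
  intro ω ω' hh
  have hA : ∀ j ≤ n, Acnt S j ω = Acnt S j ω' :=
    fun j hj => Acnt_congr (fun i hi => (hh i (by omega)).1)
  show (if v ≤ Acnt S n ω then Nproc ν S ξ (sigmaV S v ω) ω else 0)
      = (if v ≤ Acnt S n ω' then Nproc ν S ξ (sigmaV S v ω') ω' else 0)
  by_cases hc : v ≤ Acnt S n ω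
  · rw [if_pos hc, if_pos (hA n le_rfl ▸ hc)]
    have hσ1 : sigmaV S v ω ≤ n := sigmaV_le hc
    have hc' : v ≤ Acnt S n ω' := hA n le_rfl ▸ hc
    have hσ2 : sigmaV S v ω' ≤ n := sigmaV_le hc'
    have hσeq : sigmaV S v ω = sigmaV S v ω' := by
      apply le_antisymm
      · refine Nat.sInf_le ?_
        show v ≤ Acnt S (sigmaV S v ω') ω
        rw [hA _ hσ2]
        exact Acnt_sigmaV hc'
      · refine Nat.sInf_le ?_
        show v ≤ Acnt S (sigmaV S v ω) ω'
        rw [← hA _ hσ1]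
        exact Acnt_sigmaV hc
    rw [hσeq]
    unfold Nproc
    have hle' : sigmaV S v ω' ≤ n := hσ2
    rw [Gcnt_congr (fun i hi => hh i (by omega)), hA _ hle']
  · rw [if_neg hc, if_neg (by rw [← hA n le_rfl]; exact hc)]

lemma det_NF2 {v n : ℕ} :
    Det S ξ n (fun ω => if v ≤ Acnt S n ω then 0 else Nproc ν S ξ n ω) := by
  intro ω ω' hh
  have hA : Acnt S n ω = Acnt S n ω' := Acnt_congr (fun j hj => (hh j hj).1)
  have hN : Nproc ν S ξ n ω = Nproc ν S ξ n ω' := det_Nproc le_rfl ω ω' hh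
  simp only [hA, hN]

lemma Nst_eq_sum (ν : PMF ℕ) (v n : ℕ) (ω : Ω) :
    NstProc ν S ξ v n ω
      = (if v ≤ Acnt S n ω then Nproc ν S ξ (sigmaV S v ω) ω else 0)
        + (if v ≤ Acnt S n ω then 0 else Nproc ν S ξ n ω) := by
  unfold NstProc
  by_cases hc : v ≤ Acnt S n ω
  · rw [if_pos hc, if_pos hc, if_pos hc, add_zero]
  · rw [if_neg hc, if_neg hc, if_neg hc, zero_add]

lemma lint_Nst_succ_le (h : IsTBRW ρ ν P T S ξ) (hν0 : ν 0 < 1) (v n : ℕ) :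
    ∫⁻ ω, NstProc ν S ξ v (n+1) ω ∂P ≤ ∫⁻ ω, NstProc ν S ξ v n ω ∂P := by
  classical
  set F1 : Ω → ℝ≥0∞ :=
    fun ω => if v ≤ Acnt S n ω then Nproc ν S ξ (sigmaV S v ω) ω else 0 with hF1
  set F2 : Ω → ℝ≥0∞ :=
    fun ω => if v ≤ Acnt S n ω then 0 else Nproc ν S ξ n ω with hF2
  set fac : Ω → ℝ≥0∞ := fun ω => if S (n+1) ω = ([] : Vertex) then
      (betaE ν)⁻¹ * (if 1 ≤ ξ (n+1) ω then 2⁻¹ else 1) else 1 with hfac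
  have hdF1 : Det S ξ n F1 := det_NF1
  have hdF2 : Det S ξ n F2 := det_NF2
  have hpt : ∀ ω, NstProc ν S ξ v (n+1) ω = F1 ω + F2 ω * fac ω := by
    intro ω
    by_cases hA : v ≤ Acnt S n ω
    · have hA1 : v ≤ Acnt S (n+1) ω := le_trans hA (Acnt_mono S (by omega) ω)
      unfold NstProc
      rw [if_pos hA1]
      simp only [hF1, hF2, if_pos hA, zero_mul, add_zero]
    · simp only [hF1, hF2, if_neg hA, zero_add]
      by_cases hS : S (n+1) ω = ([] : Vertex)
      · have hNsucc : Nproc ν S ξ (n+1) ω = Nproc ν S ξ n ω * fac ω := by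
          unfold Nproc
          rw [Acnt_succ, if_pos hS, Gcnt_succ, hfac]
          simp only [if_pos hS]
          by_cases hξ : 1 ≤ ξ (n+1) ω
          · rw [if_pos (⟨hS, hξ⟩ : S (n+1) ω = ([] : Vertex) ∧ 1 ≤ ξ (n+1) ω), if_pos hξ]
            rw [pow_succ, pow_succ]
            ring
          · rw [if_neg (fun hc => hξ hc.2), if_neg hξ]
            rw [pow_succ, add_zero]
            ring
        unfold NstProc
        by_cases hA1 : v ≤ Acnt S (n+1) ω
        · rw [if_pos hA1, sigmaV_succ_eq (by omega) hA1]
          exact hNsucc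
        · rw [if_neg hA1]
          exact hNsucc
      · have hAeq : Acnt S (n+1) ω = Acnt S n ω := by
          rw [Acnt_succ, if_neg hS, add_zero]
        have hNeq : Nproc ν S ξ (n+1) ω = Nproc ν S ξ n ω := by
          unfold Nproc
          rw [hAeq, Gcnt_succ, if_neg (fun hc => hS hc.1), add_zero]
        unfold NstProc
        rw [if_neg (by omega : ¬ v ≤ Acnt S (n+1) ω), hNeq, hfac]
        simp only [if_neg hS, mul_one]
  have hm1 : Measurable F1 := det_measurable h hdF1
  have hm2 : Measurable F2 := det_measurable h hdF2
  refine le_of_eq ?_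
  calc ∫⁻ ω, NstProc ν S ξ v (n+1) ω ∂P
      = ∫⁻ ω, F1 ω + F2 ω * fac ω ∂P := lintegral_congr hpt
    _ = (∫⁻ ω, F1 ω ∂P) + ∫⁻ ω, F2 ω * fac ω ∂P := lintegral_add_left hm1 _
    _ = (∫⁻ ω, F1 ω ∂P) + ∫⁻ ω, F2 ω ∂P := by rw [lint_N_fac h hν0 hdF2]
    _ = ∫⁻ ω, F1 ω + F2 ω ∂P := (lintegral_add_left hm1 _).symm
    _ = ∫⁻ ω, NstProc ν S ξ v n ω ∂P :=
        lintegral_congr (fun ω => (Nst_eq_sum ν v n ω).symm)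

lemma lint_Nst_le_one (h : IsTBRW ρ ν P T S ξ) (hν0 : ν 0 < 1) {v : ℕ} (hv : 1 ≤ v)
    (n : ℕ) : ∫⁻ ω, NstProc ν S ξ v n ω ∂P ≤ 1 := by
  haveI := h.prob
  induction n with
  | zero =>
    have hpt : ∀ ω, NstProc ν S ξ v 0 ω ≤ 1 := by
      intro ω
      unfold NstProc
      rw [if_neg (by rw [Acnt_zero]; omega)]
      unfold Nproc
      rw [Acnt_zero, pow_zero, mul_one]
      exact pow_le_one' (by simp [ENNReal.inv_le_one]) _
    calc ∫⁻ ω, NstProc ν S ξ v 0 ω ∂P ≤ ∫⁻ _, 1 ∂P := lintegral_mono hpt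
      _ = 1 := by rw [lintegral_one, measure_univ]
  | succ n ih => exact le_trans (lint_Nst_succ_le h hν0 v n) ih

/-- The bad event: by the time of the `v`-th visit to the root, fewer than `v/m₀`
of the visits have created a leaf. -/
def Ev (S : ℕ → Ω → Vertex) (ξ : ℕ → Ω → ℕ) (m₀ v n : ℕ) : Set Ω :=
  {ω | v ≤ Acnt S n ω ∧ m₀ * Gcnt S ξ (sigmaV S v ω) ω ≤ v}

lemma P_Ev_le (h : IsTBRW ρ ν P T S ξ) (hν0 : ν 0 < 1) {m₀ v : ℕ} (hm₀ : 1 ≤ m₀)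
    (hv : 1 ≤ v) (n : ℕ) :
    P (Ev S ξ m₀ v n) ≤ 2 ^ (v / m₀) * (betaE ν) ^ v := by
  set ε : ℝ≥0∞ := (2⁻¹ : ℝ≥0∞) ^ (v / m₀) * ((betaE ν)⁻¹) ^ v with hε
  have hβ0 : betaE ν ≠ 0 := betaE_ne_zero hν0
  have hβtop : betaE ν ≠ ⊤ := betaE_ne_top ν
  have hεinv : ε⁻¹ = 2 ^ (v / m₀) * (betaE ν) ^ v := by
    rw [hε, ENNReal.mul_inv (Or.inl (pow_ne_zero _ (ENNReal.inv_ne_zero.2 (by norm_num))))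
      (Or.inl (by
      refine ne_of_lt (lt_of_le_of_lt (pow_le_one' (by simp [ENNReal.inv_le_one]) _) ?_)
      exact ENNReal.one_lt_top)), ← ENNReal.inv_pow, ← ENNReal.inv_pow, inv_inv, inv_inv]
  have hlow : Ev S ξ m₀ v n ⊆ {ω | ε ≤ NstProc ν S ξ v n ω} := by
    rintro ω ⟨h1, h2⟩
    show ε ≤ NstProc ν S ξ v n ω
    unfold NstProc
    rw [if_pos h1]
    unfold Nproc
    rw [Acnt_sigmaV_eq hv h1, hε]
    refine mul_le_mul' ?_ le_rfl
    have hG : Gcnt S ξ (sigmaV S v ω) ω ≤ v / m₀ :=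
      (Nat.le_div_iff_mul_le (by omega)).2 (by rw [Nat.mul_comm]; exact h2)
    exact pow_le_pow_right_of_le_one' (by simp [ENNReal.inv_le_one]) hG
  have hNmeas : Measurable (NstProc ν S ξ v n) := by
    have : NstProc ν S ξ v n = fun ω =>
        (if v ≤ Acnt S n ω then Nproc ν S ξ (sigmaV S v ω) ω else 0)
        + (if v ≤ Acnt S n ω then 0 else Nproc ν S ξ n ω) := funext (Nst_eq_sum ν v n)
    rw [this]
    exact (det_measurable h det_NF1).add (det_measurable h det_NF2)
  have hmark : ε * P (Ev S ξ m₀ v n) ≤ 1 := by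
    calc ε * P (Ev S ξ m₀ v n) ≤ ε * P {ω | ε ≤ NstProc ν S ξ v n ω} :=
          mul_le_mul_right (measure_mono hlow) _
      _ ≤ ∫⁻ ω, NstProc ν S ξ v n ω ∂P := mul_meas_ge_le_lintegral₀ hNmeas.aemeasurable ε
      _ ≤ 1 := lint_Nst_le_one h hν0 hv n
  have hε0 : ε ≠ 0 := by
    rw [hε]
    exact mul_ne_zero (pow_ne_zero _ (ENNReal.inv_ne_zero.2 (by norm_num)))
      (pow_ne_zero _ (ENNReal.inv_ne_zero.2 hβtop))
  have hεtop : ε ≠ ⊤ := by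
    rw [hε]
    refine ENNReal.mul_ne_top ?_ ?_
    · exact ne_of_lt (lt_of_le_of_lt (pow_le_one' (by simp [ENNReal.inv_le_one]) _)
        ENNReal.one_lt_top)
    · refine ne_of_lt (ENNReal.pow_lt_top ?_)
      exact ENNReal.inv_lt_top.2 (lt_of_le_of_lt (le_of_eq rfl) (hβ0.bot_lt))
  calc P (Ev S ξ m₀ v n) = ε⁻¹ * (ε * P (Ev S ξ m₀ v n)) := by
        rw [← mul_assoc, ENNReal.inv_mul_cancel hε0 hεtop, one_mul]
    _ ≤ ε⁻¹ * 1 := mul_le_mul_right hmark _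
    _ = 2 ^ (v / m₀) * (betaE ν) ^ v := by rw [mul_one, hεinv]



def BvSet (S : ℕ → Ω → Vertex) (ξ : ℕ → Ω → ℕ) (m₀ v : ℕ) : Set Ω :=
  ⋃ n, Ev S ξ m₀ v n

lemma two_mul_four_inv : (2 : ℝ≥0∞) * 4⁻¹ = 2⁻¹ := by
  have h4 : (4 : ℝ≥0∞) = 2 * 2 := by norm_num
  rw [h4, ENNReal.mul_inv (Or.inl (by norm_num)) (Or.inl (by norm_num)), ← mul_assoc,
    ENNReal.mul_inv_cancel (by norm_num) (by norm_num), one_mul]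

lemma P_Bv_le (h : IsTBRW ρ ν P T S ξ) (hν0 : ν 0 < 1) {m₀ v : ℕ} (hm₀ : 1 ≤ m₀)
    (hβ : (betaE ν) ^ m₀ ≤ 4⁻¹) :
    P (BvSet S ξ m₀ v) ≤ (2⁻¹ : ℝ≥0∞) ^ (v / m₀) := by
  haveI := h.prob
  rcases Nat.eq_zero_or_pos v with hv | hv
  · subst hv
    simp only [Nat.zero_div, pow_zero]
    exact prob_le_one
  have hmono : Monotone (fun n => Ev S ξ m₀ v n) := by
    intro a b hab ω hω
    exact ⟨le_trans hω.1 (Acnt_mono S hab ω), hω.2⟩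
  rw [BvSet, hmono.measure_iUnion]
  refine iSup_le (fun n => le_trans (P_Ev_le h hν0 hm₀ hv n) ?_)
  calc (2:ℝ≥0∞) ^ (v / m₀) * (betaE ν) ^ v
      ≤ 2 ^ (v / m₀) * ((betaE ν) ^ m₀) ^ (v / m₀) := by
        refine mul_le_mul_right ?_ _
        rw [← pow_mul]
        refine pow_le_pow_right_of_le_one' (betaE_le_one ν) ?_
        have := Nat.div_mul_le_self v m₀
        calc m₀ * (v / m₀) = v / m₀ * m₀ := Nat.mul_comm _ _
          _ ≤ v := Nat.div_mul_le_self v m₀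
    _ ≤ 2 ^ (v / m₀) * (4⁻¹ : ℝ≥0∞) ^ (v / m₀) := mul_le_mul_right (pow_le_pow_left' hβ _) _
    _ = ((2 : ℝ≥0∞) * 4⁻¹) ^ (v / m₀) := (mul_pow _ _ _).symm
    _ = (2⁻¹ : ℝ≥0∞) ^ (v / m₀) := by rw [two_mul_four_inv]

lemma tsum_pow_div_ne_top {m₀ : ℕ} (hm₀ : 1 ≤ m₀) :
    (∑' v : ℕ, (2⁻¹ : ℝ≥0∞) ^ (v / m₀)) ≠ ⊤ := by
  haveI : NeZero m₀ := ⟨by omega⟩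
  have he : (∑' v : ℕ, (2⁻¹ : ℝ≥0∞) ^ (v / m₀))
      = ∑' p : ℕ × Fin m₀, (2⁻¹ : ℝ≥0∞) ^ (((Nat.divModEquiv m₀).symm p) / m₀) :=
    ((Nat.divModEquiv m₀).symm.tsum_eq (fun v => (2⁻¹ : ℝ≥0∞) ^ (v / m₀))).symm
  have hp : ∀ p : ℕ × Fin m₀, ((Nat.divModEquiv m₀).symm p) / m₀ = p.1 := by
    intro p
    simp only [Nat.divModEquiv_symm_apply]
    rw [Nat.add_comm, Nat.add_mul_div_right _ _ (by omega), Nat.div_eq_of_lt p.2.isLt, Nat.zero_add]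
  rw [he, tsum_congr (fun p => by rw [hp p])]
  have h2 : (∑' p : ℕ × Fin m₀, (2⁻¹ : ℝ≥0∞) ^ p.1)
      = ∑' a : ℕ, ∑' _ : Fin m₀, (2⁻¹ : ℝ≥0∞) ^ a :=
    ENNReal.tsum_prod (f := fun a (_ : Fin m₀) => (2⁻¹ : ℝ≥0∞) ^ a)
  rw [h2]
  have hcol : ∀ a : ℕ, (∑' _ : Fin m₀, (2⁻¹ : ℝ≥0∞) ^ a) = (m₀ : ℝ≥0∞) * (2⁻¹) ^ a := by
    intro a
    rw [tsum_fintype, Finset.sum_const, Finset.card_univ, Fintype.card_fin, nsmul_eq_mul]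
  rw [tsum_congr hcol, ENNReal.tsum_mul_left]
  refine ENNReal.mul_ne_top (by simp) ?_
  rw [ENNReal.tsum_geometric]
  have h12 : (1 : ℝ≥0∞) - 2⁻¹ = 2⁻¹ := by
    rw [← ENNReal.inv_two_add_inv_two, ENNReal.add_sub_cancel_right (by norm_num)]
  rw [h12]
  simp

lemma ae_not_Bv (h : IsTBRW ρ ν P T S ξ) (hν0 : ν 0 < 1) {m₀ : ℕ} (hm₀ : 1 ≤ m₀)
    (hβ : (betaE ν) ^ m₀ ≤ 4⁻¹) :
    ∀ᵐ ω ∂P, ∃ V : ℕ, 1 ≤ V ∧ ∀ v, V ≤ v → ω ∉ BvSet S ξ m₀ v := by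
  have hsum : (∑' v : ℕ, P (BvSet S ξ m₀ v)) ≠ ⊤ := by
    refine ne_top_of_le_ne_top (tsum_pow_div_ne_top hm₀) (ENNReal.tsum_le_tsum ?_)
    exact fun v => P_Bv_le h hν0 hm₀ hβ
  filter_upwards [MeasureTheory.ae_eventually_notMem hsum] with ω hω
  obtain ⟨a, ha⟩ := (Filter.eventually_atTop).1 hω
  exact ⟨max a 1, le_max_right a 1, fun v hv => ha v (le_trans (le_max_left a 1) hv)⟩



/-! ### The good event and the deterministic bound on the compensator -/

def GoodV (S : ℕ → Ω → Vertex) (ξ : ℕ → Ω → ℕ) (m₀ V : ℕ) : Set Ω :=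
  {ω | ∀ n, V ≤ Acnt S n ω → Acnt S n ω < m₀ * Gcnt S ξ n ω}

lemma mem_GoodV {m₀ V : ℕ} {ω : Ω} (hV : ∀ v, V ≤ v → ω ∉ BvSet S ξ m₀ v) :
    ω ∈ GoodV S ξ m₀ V := by
  intro n hVA
  set v := Acnt S n ω with hv
  have hnot : ω ∉ BvSet S ξ m₀ v := hV v hVA
  have hnotE : ω ∉ Ev S ξ m₀ v n := fun hc => hnot (Set.mem_iUnion.2 ⟨n, hc⟩)
  have h1 : v ≤ Acnt S n ω := le_rfl
  have h2 : ¬ (m₀ * Gcnt S ξ (sigmaV S v ω) ω ≤ v) := fun hc => hnotE ⟨h1, hc⟩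
  push_neg at h2
  have hσ : sigmaV S v ω ≤ n := sigmaV_le h1
  have := Gcnt_mono S ξ hσ ω
  calc Acnt S n ω = v := rfl
    _ < m₀ * Gcnt S ξ (sigmaV S v ω) ω := h2
    _ ≤ m₀ * Gcnt S ξ n ω := Nat.mul_le_mul_left m₀ this

lemma Acnt_le_self (n : ℕ) (ω : Ω) : Acnt S n ω ≤ n := by
  calc Acnt S n ω ≤ (Finset.Icc 1 n).card := Finset.card_filter_le _ _
    _ = n := by rw [Nat.card_Icc]; omega

lemma Acnt_strict {j j' : ℕ} (hjj' : j < j') {ω : Ω} (hvis : S j' ω = ([] : Vertex)) :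
    Acnt S j ω < Acnt S j' ω := by
  obtain ⟨m, rfl⟩ : ∃ m, j' = m + 1 := ⟨j' - 1, by omega⟩
  have hstep := Acnt_succ S m ω
  rw [if_pos hvis] at hstep
  have hmono := Acnt_mono S (show j ≤ m by omega) ω
  omega

lemma harmonic_le : ∀ n : ℕ, 1 ≤ n →
    (∑ a ∈ Finset.range n, (1 : ℝ)/(a+1)) ≤ 1 + Real.log n := by
  intro n hn
  induction n with
  | zero => omega
  | succ m ih =>
    rcases Nat.eq_zero_or_pos m with hm | hm
    · subst hm
      simp
    · have hih := ih hm
      rw [Finset.sum_range_succ]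
      have hlog : Real.log m + 1/(m+1) ≤ Real.log (m+1) := by
        have hpos : (0 : ℝ) < (m : ℝ) / (m+1) := by positivity
        have := Real.log_le_sub_one_of_pos hpos
        rw [Real.log_div (by positivity) (by positivity)] at this
        have harith : (m : ℝ) / (m+1) - 1 = - (1/(m+1)) := by
          field_simp
          ring
        rw [harith] at this
        linarith
    
      have hcast : ((m + 1 : ℕ) : ℝ) = (m : ℝ) + 1 := by push_cast; ring
      rw [hcast]
      push_cast
      push_cast at hih
      linarith

lemma prod_one_add_pE_le (h : IsTBRW ρ ν P T S ξ) (hρ : 0 < ρ) {m₀ V : ℕ}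
    (hm₀ : 1 ≤ m₀) {ω : Ω} (hg : ω ∈ GoodV S ξ m₀ V) (n : ℕ) :
    (∏ j ∈ Finset.range n, (1 + pE ρ S ξ j ω))
      ≤ 2^(V+1) * ENNReal.ofReal (Real.exp (ρ * m₀ * (1 + Real.log (n+1)))) := by
  classical
  set g : ℕ → ℝ≥0∞ := fun a => if a ≤ V then 2
    else ENNReal.ofReal (Real.exp (ρ * m₀ / (a+1))) with hgdef
  have hg1 : ∀ a, 1 ≤ g a := by
    intro a
    by_cases ha : a ≤ V
    · simp only [hgdef, if_pos ha]
      exact one_le_two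
    · simp only [hgdef, if_neg ha]
      rw [show (1:ℝ≥0∞) = ENNReal.ofReal 1 by simp]
      exact ENNReal.ofReal_le_ofReal (Real.one_le_exp (by positivity))
  -- step 1: pointwise bound
  have hstep1 : ∀ j, (1 + pE ρ S ξ j ω)
      ≤ (if S j ω = ([] : Vertex) then g (Acnt S j ω) else 1) := by
    intro j
    by_cases hv : S j ω = ([] : Vertex)
    · rw [if_pos hv]
      by_cases hA : Acnt S j ω ≤ V
      · simp only [hgdef, if_pos hA]
        calc 1 + pE ρ S ξ j ω ≤ 1 + 1 := add_le_add_right (pE_le_one hρ j ω) 1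
          _ = 2 := one_add_one_eq_two
      · simp only [hgdef, if_neg hA]
        push_neg at hA
        have hgood := hg j (by omega)
        have hGpos : Acnt S j ω + 1 ≤ m₀ * Gcnt S ξ j ω := hgood
        have hle : pE ρ S ξ j ω ≤ ENNReal.ofReal (ρ * m₀ / (Acnt S j ω + 1)) := by
          unfold pE
          rw [if_pos hv]
          refine ENNReal.ofReal_le_ofReal ?_
          rw [div_le_div_iff₀ (by positivity) (by positivity)]
          have hGr : ((Acnt S j ω : ℝ) + 1) ≤ (m₀ : ℝ) * Gcnt S ξ j ω := by
            exact_mod_cast hGpos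
          have h1 : ρ * ((Acnt S j ω : ℝ) + 1) ≤ ρ * ((m₀:ℝ) * Gcnt S ξ j ω) :=
            mul_le_mul_of_nonneg_left hGr hρ.le
          have h2 : (0:ℝ) ≤ ρ * m₀ * ρ := by positivity
          nlinarith [h1, h2]
        calc 1 + pE ρ S ξ j ω ≤ 1 + ENNReal.ofReal (ρ * m₀ / (Acnt S j ω + 1)) :=
              add_le_add_right hle 1
          _ = ENNReal.ofReal (1 + ρ * m₀ / (Acnt S j ω + 1)) := by
              rw [ENNReal.ofReal_add (by norm_num) (by positivity), ENNReal.ofReal_one]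
          _ ≤ ENNReal.ofReal (Real.exp (ρ * m₀ / (Acnt S j ω + 1))) := by
              refine ENNReal.ofReal_le_ofReal ?_
              have := Real.add_one_le_exp (ρ * m₀ / (Acnt S j ω + 1))
              linarith
    · unfold pE
      rw [if_neg hv, if_neg hv, add_zero]
  -- step 2: reindex over visit counts
  have hmain : (∏ j ∈ Finset.range n, (1 + pE ρ S ξ j ω))
      ≤ ∏ a ∈ Finset.range (n+1), g a := by
    calc (∏ j ∈ Finset.range n, (1 + pE ρ S ξ j ω))
        ≤ ∏ j ∈ Finset.range n, (if S j ω = ([] : Vertex) then g (Acnt S j ω) else 1) :=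
          Finset.prod_le_prod' (fun j _ => hstep1 j)
      _ = ∏ j ∈ (Finset.range n).filter (fun j => S j ω = ([] : Vertex)),
            g (Acnt S j ω) := (Finset.prod_filter _ _).symm
      _ = ∏ a ∈ ((Finset.range n).filter (fun j => S j ω = ([] : Vertex))).image
            (fun j => Acnt S j ω), g a := by
          rw [Finset.prod_image]
          intro x hx y hy hxy
          rw [Finset.mem_coe, Finset.mem_filter] at hx hy
          by_contra hne
          rcases Nat.lt_or_ge x y with hlt | hge
          · exact absurd hxy (ne_of_lt (Acnt_strict hlt hy.2))
          · have hlt : y < x := by omega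
            exact absurd hxy.symm (ne_of_lt (Acnt_strict hlt hx.2))
      _ ≤ ∏ a ∈ Finset.range (n+1), g a := by
          refine Finset.prod_le_prod_of_subset_of_one_le' ?_ (fun a _ _ => hg1 a)
          intro a ha
          rw [Finset.mem_image] at ha
          obtain ⟨j, hj, rfl⟩ := ha
          rw [Finset.mem_filter, Finset.mem_range] at hj
          rw [Finset.mem_range]
          have := Acnt_le_self (S := S) j ω
          omega
  refine le_trans hmain ?_
  -- step 3: bound the product over visit counts
  have hsplit : (∏ a ∈ Finset.range (n+1), g a)
      = (∏ a ∈ (Finset.range (n+1)).filter (fun a => a ≤ V), g a)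
        * ∏ a ∈ (Finset.range (n+1)).filter (fun a => ¬ a ≤ V), g a :=
    (Finset.prod_filter_mul_prod_filter_not _ _ _).symm
  rw [hsplit]
  refine mul_le_mul' ?_ ?_
  · calc (∏ a ∈ (Finset.range (n+1)).filter (fun a => a ≤ V), g a)
        ≤ ∏ _a ∈ (Finset.range (n+1)).filter (fun a => a ≤ V), 2 := by
          refine Finset.prod_le_prod' (fun a ha => ?_)
          rw [Finset.mem_filter] at ha
          simp only [hgdef, if_pos ha.2]
          exact le_rfl
      _ = 2 ^ ((Finset.range (n+1)).filter (fun a => a ≤ V)).card := by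
          rw [Finset.prod_const]
      _ ≤ 2 ^ (V+1) := by
          refine pow_le_pow_right' one_le_two ?_
          calc ((Finset.range (n+1)).filter (fun a => a ≤ V)).card
              ≤ (Finset.range (V+1)).card := by
                refine Finset.card_le_card ?_
                intro a ha
                rw [Finset.mem_filter] at ha
                rw [Finset.mem_range]
                omega
            _ = V + 1 := Finset.card_range _
  · calc (∏ a ∈ (Finset.range (n+1)).filter (fun a => ¬ a ≤ V), g a)
        ≤ ∏ a ∈ (Finset.range (n+1)).filter (fun a => ¬ a ≤ V),
            ENNReal.ofReal (Real.exp (ρ * m₀ / (a+1))) := by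
          refine Finset.prod_le_prod' (fun a ha => ?_)
          rw [Finset.mem_filter] at ha
          simp only [hgdef, if_neg ha.2]
          exact le_rfl
      _ ≤ ∏ a ∈ Finset.range (n+1), ENNReal.ofReal (Real.exp (ρ * m₀ / (a+1))) := by
          refine Finset.prod_le_prod_of_subset_of_one_le' (Finset.filter_subset _ _) ?_
          intro a _ _
          rw [show (1:ℝ≥0∞) = ENNReal.ofReal 1 by simp]
          exact ENNReal.ofReal_le_ofReal (Real.one_le_exp (by positivity))
      _ = ENNReal.ofReal (∏ a ∈ Finset.range (n+1), Real.exp (ρ * m₀ / (a+1))) := by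
          rw [← ENNReal.ofReal_prod_of_nonneg]
          intro a _
          positivity
      _ = ENNReal.ofReal (Real.exp (∑ a ∈ Finset.range (n+1), ρ * m₀ / (a+1))) := by
          rw [Real.exp_sum]
      _ ≤ ENNReal.ofReal (Real.exp (ρ * m₀ * (1 + Real.log (n+1)))) := by
          refine ENNReal.ofReal_le_ofReal (Real.exp_le_exp.2 ?_)
          have hsum : (∑ a ∈ Finset.range (n+1), ρ * m₀ / (a+1))
              = ρ * m₀ * ∑ a ∈ Finset.range (n+1), (1:ℝ)/(a+1) := by
            rw [Finset.mul_sum]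
            refine Finset.sum_congr rfl (fun a _ => ?_)
            field_simp
          rw [hsum]
          have hh := harmonic_le (n+1) (by omega)
          have hcast : ((n + 1 : ℕ) : ℝ) = (n : ℝ) + 1 := by push_cast; ring
          rw [hcast] at hh
          have hpos : (0:ℝ) ≤ ρ * m₀ := by positivity
          nlinarith



lemma det_Uproc (n : ℕ) : Det S ξ n (Uproc ρ S ξ n) := by
  intro ω ω' hh
  show (2:ℝ≥0∞) ^ crossCount S n ω * (∏ j ∈ Finset.range n, (1 + pE ρ S ξ j ω))⁻¹
      = (2:ℝ≥0∞) ^ crossCount S n ω' * (∏ j ∈ Finset.range n, (1 + pE ρ S ξ j ω'))⁻¹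
  rw [crossCount_congr (fun j hj => (hh j hj).1)]
  congr 2
  exact Finset.prod_congr rfl (fun j hj => by
    rw [pE_congr (show j ≤ n by
      have := Finset.mem_range.1 hj
      omega) hh])

lemma P_cross_large (h : IsTBRW ρ ν P T S ξ) (hρ : 0 < ρ) {m₀ V : ℕ} (hm₀ : 1 ≤ m₀)
    (n L : ℕ) :
    P (GoodV S ξ m₀ V ∩ {ω | L ≤ crossCount S n ω})
      ≤ (2:ℝ≥0∞)^(V+1) * ENNReal.ofReal (Real.exp (ρ * m₀ * (1 + Real.log (n+1))))
        * ((2:ℝ≥0∞)^L)⁻¹ := by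
  set D : ℝ≥0∞ := (2:ℝ≥0∞)^(V+1)
      * ENNReal.ofReal (Real.exp (ρ * m₀ * (1 + Real.log (n+1)))) with hD
  have hD0 : D ≠ 0 := by
    rw [hD]
    refine mul_ne_zero (by positivity) ?_
    exact ne_of_gt (ENNReal.ofReal_pos.2 (Real.exp_pos _))
  have hDtop : D ≠ ⊤ := by
    rw [hD]
    exact ENNReal.mul_ne_top (ENNReal.pow_ne_top (by norm_num)) ENNReal.ofReal_ne_top
  set ε : ℝ≥0∞ := (2:ℝ≥0∞)^L * D⁻¹ with hε
  have hε0 : ε ≠ 0 := mul_ne_zero (by positivity) (ENNReal.inv_ne_zero.2 hDtop)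
  have hεtop : ε ≠ ⊤ :=
    ENNReal.mul_ne_top (ENNReal.pow_ne_top (by norm_num)) (ENNReal.inv_ne_top.2 hD0)
  have hlow : GoodV S ξ m₀ V ∩ {ω | L ≤ crossCount S n ω}
      ⊆ {ω | ε ≤ Uproc ρ S ξ n ω} := by
    rintro ω ⟨hg, hC⟩
    show ε ≤ Uproc ρ S ξ n ω
    unfold Uproc
    rw [hε]
    refine mul_le_mul' (pow_le_pow_right' one_le_two hC) ?_
    have hprod := prod_one_add_pE_le h hρ hm₀ hg n
    rw [← hD] at hprod
    exact ENNReal.inv_le_inv' hprod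
  have hUmeas : Measurable (Uproc ρ S ξ n) := det_measurable h (det_Uproc n)
  have hmark : ε * P (GoodV S ξ m₀ V ∩ {ω | L ≤ crossCount S n ω}) ≤ 1 := by
    calc ε * P (GoodV S ξ m₀ V ∩ {ω | L ≤ crossCount S n ω})
        ≤ ε * P {ω | ε ≤ Uproc ρ S ξ n ω} := mul_le_mul_right (measure_mono hlow) _
      _ ≤ ∫⁻ ω, Uproc ρ S ξ n ω ∂P := mul_meas_ge_le_lintegral₀ hUmeas.aemeasurable ε
      _ ≤ 1 := lint_U_le_one h hρ n
  have hεinv : ε⁻¹ = D * ((2:ℝ≥0∞)^L)⁻¹ := by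
    rw [hε, ENNReal.mul_inv (Or.inl (by positivity))
      (Or.inl (ENNReal.pow_ne_top (by norm_num))), inv_inv, mul_comm]
  calc P (GoodV S ξ m₀ V ∩ {ω | L ≤ crossCount S n ω})
      = ε⁻¹ * (ε * P (GoodV S ξ m₀ V ∩ {ω | L ≤ crossCount S n ω})) := by
        rw [← mul_assoc, ENNReal.inv_mul_cancel hε0 hεtop, one_mul]
    _ ≤ ε⁻¹ * 1 := mul_le_mul_right hmark _
    _ = D * ((2:ℝ≥0∞)^L)⁻¹ := by rw [mul_one, hεinv]
    _ = (2:ℝ≥0∞)^(V+1) * ENNReal.ofReal (Real.exp (ρ * m₀ * (1 + Real.log (n+1))))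
        * ((2:ℝ≥0∞)^L)⁻¹ := by rw [hD]

/-- The per-`n` threshold for the number of crossings. -/
noncomputable def Lnat (ρ : ℝ) (m₀ V n : ℕ) : ℕ :=
  V + 2 + Nat.ceil ((ρ * m₀ + 2)/Real.log 2 * Real.log (n+1))

lemma real_key (hρ : 0 < ρ) (m₀ n c : ℕ) (hm₀ : 1 ≤ m₀)
    (hc : (ρ * m₀ + 2)/Real.log 2 * Real.log (n+1) ≤ c) :
    Real.exp (ρ * m₀ * (1 + Real.log (n+1))) / 2^c
      ≤ Real.exp (ρ * m₀) / ((n:ℝ)+1)^2 := by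
  have hlog2 : (0:ℝ) < Real.log 2 := Real.log_pos one_lt_two
  set x : ℝ := Real.log (n+1) with hx
  have hx0 : 0 ≤ x := Real.log_nonneg (by push_cast; linarith [Nat.cast_nonneg (α := ℝ) n])
  have h2c : Real.exp ((ρ * m₀ + 2) * x) ≤ 2^c := by
    have hpow : (2:ℝ)^c = Real.exp (c * Real.log 2) := by
      rw [← Real.log_pow, Real.exp_log (by positivity)]
    rw [hpow]
    refine Real.exp_le_exp.2 ?_
    have h1 : (ρ * (m₀:ℝ) + 2) * x = ((ρ * m₀ + 2)/Real.log 2 * x) * Real.log 2 := by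
      field_simp
    rw [h1]
    exact mul_le_mul_of_nonneg_right hc hlog2.le
  have hexp2 : Real.exp x = (n:ℝ) + 1 := by
    rw [hx]
    have : ((n:ℝ) + 1) = ((n+1 : ℕ) : ℝ) := by push_cast; ring
    rw [this, Real.exp_log (by positivity)]
  calc Real.exp (ρ * m₀ * (1 + x)) / 2^c
      ≤ Real.exp (ρ * m₀ * (1 + x)) / Real.exp ((ρ * m₀ + 2) * x) := by
        refine div_le_div_of_nonneg_left (Real.exp_pos _).le (Real.exp_pos _) h2c
    _ = Real.exp (ρ * m₀ - 2 * x) := by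
        rw [← Real.exp_sub]
        congr 1
        ring
    _ = Real.exp (ρ * m₀) / (Real.exp x)^2 := by
        rw [Real.exp_sub]
        congr 1
        rw [sq, ← Real.exp_add]
        congr 1
        ring
    _ = Real.exp (ρ * m₀) / ((n:ℝ)+1)^2 := by rw [hexp2]

lemma summable_inv_sq : Summable (fun n : ℕ => 1 / ((n:ℝ)+1)^2) := by
  have h := (Real.summable_one_div_nat_pow (p := 2)).2 one_lt_two
  have h2 := h.comp_injective Nat.succ_injective
  refine h2.congr (fun n => ?_)
  simp only [Function.comp]
  push_cast
  ring_nf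

lemma tsum_main_ne_top (c : ℝ) :
    (∑' n : ℕ, ENNReal.ofReal (Real.exp c / ((n:ℝ)+1)^2)) ≠ ⊤ := by
  have hsummable : Summable (fun n : ℕ => Real.exp c / ((n:ℝ)+1)^2) := by
    have := summable_inv_sq.mul_left (Real.exp c)
    refine this.congr (fun n => ?_)
    field_simp
  rw [← ENNReal.ofReal_tsum_of_nonneg (fun n => by positivity) hsummable]
  exact ENNReal.ofReal_ne_top

lemma ae_cross_small (h : IsTBRW ρ ν P T S ξ) (hρ : 0 < ρ) {m₀ : ℕ} (hm₀ : 1 ≤ m₀)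
    (V : ℕ) :
    ∀ᵐ ω ∂P, ∀ᶠ n in atTop,
      ¬ (ω ∈ GoodV S ξ m₀ V ∧ Lnat ρ m₀ V n ≤ crossCount S n ω) := by
  have hbound : ∀ n, P (GoodV S ξ m₀ V ∩ {ω | Lnat ρ m₀ V n ≤ crossCount S n ω})
      ≤ ENNReal.ofReal (Real.exp (ρ * m₀) / ((n:ℝ)+1)^2) := by
    intro n
    refine le_trans (P_cross_large h hρ hm₀ n (Lnat ρ m₀ V n)) ?_
    set c : ℕ := Nat.ceil ((ρ * m₀ + 2)/Real.log 2 * Real.log (n+1)) with hcdef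
    have hLsplit : ((2:ℝ≥0∞) ^ (Lnat ρ m₀ V n))⁻¹
        = ((2:ℝ≥0∞)^(V+1))⁻¹ * ((2:ℝ≥0∞)^(c+1))⁻¹ := by
      rw [← ENNReal.mul_inv (Or.inl (by positivity)) (Or.inr (by positivity)), ← pow_add]
      congr 2
      rw [Lnat]
      omega
    rw [hLsplit, ← mul_assoc]
    have hcancel : (2:ℝ≥0∞)^(V+1) * ENNReal.ofReal (Real.exp (ρ * m₀ * (1 + Real.log (n+1))))
        * ((2:ℝ≥0∞)^(V+1))⁻¹ = ENNReal.ofReal (Real.exp (ρ * m₀ * (1 + Real.log (n+1)))) := by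
      rw [mul_comm ((2:ℝ≥0∞)^(V+1)) _, mul_assoc,
        ENNReal.mul_inv_cancel (by positivity) (ENNReal.pow_ne_top (by norm_num)), mul_one]
    rw [hcancel]
    have hp1 : ((2:ℝ≥0∞)^(c+1))⁻¹ ≤ ((2:ℝ≥0∞)^c)⁻¹ :=
      ENNReal.inv_le_inv' (pow_le_pow_right' one_le_two (by omega))
    refine le_trans (mul_le_mul_right hp1 _) ?_
    have hofr : ((2:ℝ≥0∞)^c)⁻¹ = ENNReal.ofReal (1/(2:ℝ)^c) := by
      rw [← ENNReal.ofReal_ofNat, ← ENNReal.ofReal_pow (by norm_num),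
        ← ENNReal.ofReal_inv_of_pos (by positivity), one_div]
    rw [hofr, ← ENNReal.ofReal_mul (by positivity)]
    refine ENNReal.ofReal_le_ofReal ?_
    have := real_key hρ m₀ n c hm₀ (Nat.le_ceil _)
    calc Real.exp (ρ * m₀ * (1 + Real.log (n+1))) * (1/(2:ℝ)^c)
        = Real.exp (ρ * m₀ * (1 + Real.log (n+1))) / 2^c := by ring
      _ ≤ Real.exp (ρ * m₀) / ((n:ℝ)+1)^2 := this
  have hsum : (∑' n : ℕ, P (GoodV S ξ m₀ V
      ∩ {ω | Lnat ρ m₀ V n ≤ crossCount S n ω})) ≠ ⊤ :=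
    ne_top_of_le_ne_top (tsum_main_ne_top (ρ * m₀)) (ENNReal.tsum_le_tsum hbound)
  filter_upwards [MeasureTheory.ae_eventually_notMem hsum] with ω hω
  filter_upwards [hω] with n hn
  exact fun hc => hn ⟨hc.1, hc.2⟩

lemma exists_m0 (hν0 : ν 0 < 1) : ∃ m₀ : ℕ, 1 ≤ m₀ ∧ (betaE ν)^m₀ ≤ 4⁻¹ := by
  have htend := ENNReal.tendsto_pow_atTop_nhds_zero_of_lt_one (betaE_lt_one hν0)
  have hev : ∀ᶠ m in atTop, (betaE ν)^m ≤ 4⁻¹ :=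
    htend.eventually_le_const (by norm_num)
  obtain ⟨m₀, hm⟩ := (hev.and (Filter.eventually_ge_atTop 1)).exists
  exact ⟨m₀, hm.2, hm.1⟩


end Aux

/-- **Lemma (exponential growth of the return times through the root loop).** If
`ρ > 1 + 2ν̄` (with `ν̄ < ∞`), there is a `δ > 0` such that almost surely
`τ_k ≥ e^{δk}` for all `k` large enough. -/
theorem tbrw_tau_exponential_growth
    (ρ : ℝ) (hρ : 0 < ρ) (ν : PMF ℕ) (hν0 : ν 0 < 1) (hnubar : nubar ν < ⊤)
    (hrec : 1 + 2 * nubar ν < ENNReal.ofReal ρ)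
    {Ω : Type*} [MeasurableSpace Ω] (P : Measure Ω)
    (T : ℕ → Ω → Finset Vertex) (S : ℕ → Ω → Vertex) (ξ : ℕ → Ω → ℕ)
    (h : IsTBRW ρ ν P T S ξ) :
    ∃ δ : ℝ, 0 < δ ∧ ∀ᵐ ω ∂P, ∀ᶠ k : ℕ in atTop,
      ENNReal.ofReal (Real.exp (δ * k)) ≤ tauE S k ω := by
  classical
  obtain ⟨m₀, hm₀, hβ⟩ := exists_m0 (ν := ν) hν0
  set Kc : ℝ := (ρ * m₀ + 2)/Real.log 2 with hKc
  have hlog2 : (0:ℝ) < Real.log 2 := Real.log_pos one_lt_two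
  have hKc0 : 0 < Kc := by
    rw [hKc]
    have hm0R : (1:ℝ) ≤ (m₀:ℝ) := by exact_mod_cast hm₀
    positivity
  set δ : ℝ := 1/(2*(Kc+1)) with hδdef
  have hδ : 0 < δ := by rw [hδdef]; positivity
  have hKδ : Kc * δ ≤ 1/2 := by
    rw [hδdef, mul_one_div, div_le_div_iff₀ (by positivity) (by norm_num)]
    nlinarith [hKc0]
  refine ⟨δ, hδ, ?_⟩
  have hae1 := ae_not_Bv h hν0 hm₀ hβ
  have hae2 : ∀ᵐ ω ∂P, ∀ V : ℕ, ∀ᶠ n in atTop,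
      ¬ (ω ∈ GoodV S ξ m₀ V ∧ Lnat ρ m₀ V n ≤ crossCount S n ω) :=
    (MeasureTheory.ae_all_iff).2 (fun V => ae_cross_small h hρ hm₀ V)
  filter_upwards [hae1, hae2] with ω h1 h2
  obtain ⟨V, hV1, hV⟩ := h1
  have hgood : ω ∈ GoodV S ξ m₀ V := mem_GoodV hV
  obtain ⟨N, hN⟩ := (Filter.eventually_atTop).1 (h2 V)
  have hCn : ∀ n, N ≤ n → crossCount S n ω < Lnat ρ m₀ V n := by
    intro n hn
    by_contra hcon
    push_neg at hcon
    exact hN n hn ⟨hgood, hcon⟩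
  have hLreal : ∀ n : ℕ, (Lnat ρ m₀ V n : ℝ) ≤ V + 3 + Kc * Real.log (n+1) := by
    intro n
    have hnn : (0:ℝ) ≤ Kc * Real.log (n+1) :=
      mul_nonneg hKc0.le (Real.log_nonneg (by
        have : (0:ℝ) ≤ (n:ℝ) := Nat.cast_nonneg n
        linarith))
    have hceil := Nat.ceil_lt_add_one hnn
    rw [Lnat]
    push_cast
    rw [← hKc]
    linarith
  set B1 : ℝ := 2*((V:ℝ) + 3 + Kc) + 1 with hB1
  set B2 : ℝ := (V:ℝ) + 3 + Kc * Real.log (N+1) + 1 with hB2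
  set k₀ : ℕ := Nat.ceil (max B1 B2) + 1 with hk₀def
  rw [Filter.eventually_atTop]
  refine ⟨k₀, fun k hk => ?_⟩
  have hkR : (k₀ : ℝ) ≤ k := Nat.cast_le.2 hk
  have hk₀R : ((Nat.ceil (max B1 B2) : ℕ) : ℝ) + 1 = (k₀ : ℝ) := by
    rw [hk₀def]
    push_cast
    ring
  have hmaxle : max B1 B2 ≤ ((Nat.ceil (max B1 B2) : ℕ) : ℝ) := Nat.le_ceil _
  have hB1k : B1 < k := by
    have := le_max_left B1 B2
    linarith
  have hB2k : B2 < k := by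
    have := le_max_right B1 B2
    linarith
  refine le_sInf ?_
  rintro t ⟨n, rfl, hn1, hCk⟩
  rw [show ((n : ℕ) : ℝ≥0∞) = ENNReal.ofReal n from (ENNReal.ofReal_natCast n).symm]
  refine ENNReal.ofReal_le_ofReal ?_
  by_contra hcon
  push_neg at hcon
  have hnpos : (0:ℝ) < n := by
    have : (1:ℝ) ≤ (n:ℝ) := by exact_mod_cast hn1
    linarith
  have hC : crossCount S n ω < k := by
    rcases le_or_gt N n with hNn | hNn
    · have hLn := hCn n hNn
      have hL := hLreal n
      have hlogn : Real.log ((n:ℝ)+1) < 1 + δ * k := by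
        have h2n : ((n:ℝ)+1) ≤ 2*n := by
          have : (1:ℝ) ≤ (n:ℝ) := by exact_mod_cast hn1
          linarith
        have hlogmono : Real.log ((n:ℝ)+1) ≤ Real.log (2*(n:ℝ)) :=
          Real.log_le_log (by positivity) h2n
        have hsplit : Real.log (2*(n:ℝ)) = Real.log 2 + Real.log (n:ℝ) :=
          Real.log_mul (by norm_num) (ne_of_gt hnpos)
        have hlt : Real.log (n:ℝ) < δ * k := by
          have := Real.log_lt_log hnpos hcon
          rwa [Real.log_exp] at this
        have hl2 : Real.log 2 < 1 := by
          have := Real.log_two_lt_d9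
          linarith
        linarith
      have hc1 : (crossCount S n ω : ℝ) < (Lnat ρ m₀ V n : ℝ) := by exact_mod_cast hLn
      have hc2 : (crossCount S n ω : ℝ) < (V:ℝ) + 3 + Kc * (1 + δ * k) := by
        have hmul : Kc * Real.log ((n:ℝ)+1) ≤ Kc * (1 + δ * k) :=
          mul_le_mul_of_nonneg_left hlogn.le hKc0.le
        have : (Lnat ρ m₀ V n : ℝ) ≤ (V:ℝ) + 3 + Kc * Real.log ((n:ℝ)+1) := hL
        linarith
      have hkpos : (0:ℝ) ≤ (k:ℝ) := Nat.cast_nonneg k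
      have hmul2 : Kc * δ * k ≤ (1/2) * k := mul_le_mul_of_nonneg_right hKδ hkpos
      have : (crossCount S n ω : ℝ) < (k:ℝ) := by nlinarith [hB1k]
      exact_mod_cast this
    · have hmono := crossCount_mono S (le_of_lt hNn) ω
      have hLN := hCn N le_rfl
      have hLNr := hLreal N
      have hC1 : (crossCount S n ω : ℝ) ≤ (crossCount S N ω : ℝ) := by exact_mod_cast hmono
      have hC2 : (crossCount S N ω : ℝ) < (Lnat ρ m₀ V N : ℝ) := by exact_mod_cast hLN
      have : (crossCount S n ω : ℝ) < (k:ℝ) := by linarith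
      exact_mod_cast this
  omega

end TBRWPaper
end
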